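/- arXiv:2312.11689 — 6 statements merged into one kernel-verified Lean document; each statement's English description precedes it below -/
import Mathlib

section
/- Let ν ≪ μ be probability measures on (E, 𝓔) and let w = dμ/dν (allowing w = ∞ where ν vanishes). Then for any bounded measurable f and any s > 0, var_μ(f) ≤ s · var_ν(f) + μ({w > s}) · ‖f‖²_osc, where ‖f‖_osc = ess sup_μ f − ess inf_μ f. -/
open MeasureTheory
open scoped ENNReal

/-- If `ν ≪ μ` are probability measures and `w = dμ/dν` (with `w = ∞`
allowed on a `ν`-null set carrying the part of `μ` not absolutely continuous w.r.t. `ν`),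
then for every bounded measurable `f` and every `s > 0`,
`var_μ(f) ≤ s · var_ν(f) + μ(w > s) · ‖f‖²_osc`. -/
theorem var_le_var_add_tail_osc
    {E : Type*} [MeasurableSpace E] (μ ν : Measure E)
    [IsProbabilityMeasure μ] [IsProbabilityMeasure ν]
    (hac : ν ≪ μ)
    (w : E → ℝ≥0∞) (hw : Measurable w)
    (hwinf : ν {x | w x = ∞} = 0)
    (hdens : ∀ B : Set E, MeasurableSet B →
      μ B = (∫⁻ x in B, w x ∂ν) + μ (B ∩ {x | w x = ∞}))
    (f : E → ℝ) (hf : Measurable f) (hbd : ∃ C, ∀ x, |f x| ≤ C)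
    (s : ℝ) (hs : 0 < s) :
    (⨅ t : ℝ, ∫ x, (f x - t) ^ 2 ∂μ)
      ≤ s * (⨅ t : ℝ, ∫ x, (f x - t) ^ 2 ∂ν)
        + (μ {x | ENNReal.ofReal s < w x}).toReal
          * (essSup f μ - essInf f μ) ^ 2 := by
  classical
  obtain ⟨C, hC⟩ := hbd
  -- integrability of (f - t)^2 against any finite measure
  have hfi : ∀ (ρ : Measure E) [IsFiniteMeasure ρ], Integrable f ρ := by
    intro ρ _
    exact (integrable_const C).mono' hf.aestronglyMeasurable (ae_of_all _ hC)
  have hint : ∀ (ρ : Measure E) [IsFiniteMeasure ρ] (t : ℝ),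
      Integrable (fun x => (f x - t) ^ 2) ρ := by
    intro ρ _ t
    refine (integrable_const ((C + |t|) ^ 2)).mono'
      ((hf.sub measurable_const).pow_const 2).aestronglyMeasurable
      (ae_of_all _ fun x => ?_)
    have h1 : |f x - t| ≤ C + |t| := by
      have := abs_add_le (f x) (-t)
      simp only [abs_neg, ← sub_eq_add_neg] at this
      exact this.trans (add_le_add (hC x) le_rfl)
    calc |(f x - t) ^ 2| = |f x - t| ^ 2 := by rw [← sq_abs, abs_of_nonneg (sq_nonneg _)]
      _ ≤ (C + |t|) ^ 2 := pow_le_pow_left₀ (abs_nonneg _) h1 2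
  set a := essInf f μ with ha
  set b := essSup f μ with hb
  set m := ∫ x, f x ∂ν with hm
  -- a.e. bounds
  have hbdd1 : Filter.IsBoundedUnder (· ≤ ·) (ae μ) f :=
    Filter.isBoundedUnder_of ⟨C, fun x => (le_abs_self _).trans (hC x)⟩
  have hbdd2 : Filter.IsBoundedUnder (· ≥ ·) (ae μ) f :=
    Filter.isBoundedUnder_of ⟨-C, fun x => neg_le_of_abs_le (hC x)⟩
  have hfb : ∀ᵐ x ∂μ, f x ≤ b := ae_le_essSup hbdd1
  have hfa : ∀ᵐ x ∂μ, a ≤ f x := ae_essInf_le hbdd2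
  have hfbν : ∀ᵐ x ∂ν, f x ≤ b := hac.ae_le hfb
  have hfaν : ∀ᵐ x ∂ν, a ≤ f x := hac.ae_le hfa
  -- the ν-mean m lies in [a, b]
  have hma : a ≤ m := by
    have : ∫ x, (a : ℝ) ∂ν ≤ ∫ x, f x ∂ν :=
      integral_mono_ae (integrable_const a) (hfi ν) hfaν
    simpa using this
  have hmb : m ≤ b := by
    have : ∫ x, f x ∂ν ≤ ∫ x, (b : ℝ) ∂ν :=
      integral_mono_ae (hfi ν) (integrable_const b) hfbν
    simpa using this
  -- a.e. bound on (f - m)^2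
  have hosc : ∀ᵐ x ∂μ, (f x - m) ^ 2 ≤ (b - a) ^ 2 := by
    filter_upwards [hfa, hfb] with x h1 h2
    have habs : |f x - m| ≤ b - a := by
      rw [abs_le]
      constructor <;> nlinarith
    calc (f x - m) ^ 2 = |f x - m| ^ 2 := by rw [sq_abs]
      _ ≤ (b - a) ^ 2 := pow_le_pow_left₀ (abs_nonneg _) habs 2
  -- the variance under ν is attained at the mean m
  have hmean : ∫ x, (f x - m) ^ 2 ∂ν ≤ ⨅ t : ℝ, ∫ x, (f x - t) ^ 2 ∂ν := by
    refine le_ciInf fun t => ?_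
    have hexp : (fun x => (f x - t) ^ 2)
        = fun x => (f x - m) ^ 2 + (2 * (m - t) * (f x - m) + (m - t) ^ 2) :=
      funext fun x => by ring
    have hi1 := hint ν m
    have hi2 : Integrable (fun x => 2 * (m - t) * (f x - m)) ν :=
      ((hfi ν).sub (integrable_const m)).const_mul _
    have hi3 : Integrable (fun x => 2 * (m - t) * (f x - m) + (m - t) ^ 2) ν :=
      hi2.add (integrable_const _)
    have hzero : ∫ x, (f x - m) ∂ν = 0 := by
      rw [integral_sub (hfi ν) (integrable_const m)]
      simp [hm]
    calc ∫ x, (f x - m) ^ 2 ∂ν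
        ≤ ∫ x, (f x - m) ^ 2 ∂ν + (m - t) ^ 2 := le_add_of_nonneg_right (sq_nonneg _)
      _ = ∫ x, (f x - t) ^ 2 ∂ν := by
          rw [hexp, integral_add hi1 hi3, integral_add hi2 (integrable_const _),
            integral_const_mul, hzero]
          simp
  -- setup for lintegrals
  set G : E → ℝ≥0∞ := fun x => ENNReal.ofReal ((f x - m) ^ 2) with hGdef
  have hGm : Measurable G := ((hf.sub measurable_const).pow_const 2).ennreal_ofReal
  set A : Set E := {x | w x ≤ ENNReal.ofReal s} with hAdef
  have hA : MeasurableSet A := measurableSet_le hw measurable_const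
  have hAc : Aᶜ = {x | ENNReal.ofReal s < w x} := by
    ext x; simp [hAdef, not_le]
  -- μ restricted to A equals ν.withDensity w restricted to A
  have hrestr : μ.restrict A = (ν.withDensity w).restrict A := by
    refine Measure.ext fun B hB => ?_
    rw [Measure.restrict_apply hB, Measure.restrict_apply hB,
      hdens _ (hB.inter hA), withDensity_apply _ (hB.inter hA)]
    have hemp : B ∩ A ∩ {x | w x = ∞} = ∅ := by
      ext x
      simp only [Set.mem_inter_iff, Set.mem_setOf_eq, Set.mem_empty_iff_false, iff_false, hAdef]
      rintro ⟨⟨-, hxA⟩, hxinf⟩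
      rw [hxinf] at hxA
      exact absurd hxA (by simp)
    rw [hemp, measure_empty, add_zero]
  -- bound the part on A
  have h1 : ∫⁻ x in A, G x ∂μ ≤ ENNReal.ofReal s * ∫⁻ x, G x ∂ν := by
    have : ∫⁻ x in A, G x ∂μ = ∫⁻ x in A, (w * G) x ∂ν := by
      rw [show ∫⁻ x in A, G x ∂μ = ∫⁻ x, G x ∂(μ.restrict A) from rfl, hrestr,
        restrict_withDensity hA, lintegral_withDensity_eq_lintegral_mul _ hw hGm]
    rw [this]
    calc ∫⁻ x in A, (w * G) x ∂ν
        ≤ ∫⁻ x in A, ENNReal.ofReal s * G x ∂ν :=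
          setLIntegral_mono (hGm.const_mul _) fun x hx => mul_le_mul_left hx _
      _ = ENNReal.ofReal s * ∫⁻ x in A, G x ∂ν := lintegral_const_mul _ hGm
      _ ≤ ENNReal.ofReal s * ∫⁻ x, G x ∂ν :=
          mul_le_mul_right (setLIntegral_le_lintegral _ _) _
  -- bound the part on Aᶜ
  have h2 : ∫⁻ x in Aᶜ, G x ∂μ ≤ μ Aᶜ * ENNReal.ofReal ((b - a) ^ 2) := by
    have hGb : ∀ᵐ x ∂μ, G x ≤ ENNReal.ofReal ((b - a) ^ 2) :=
      hosc.mono fun x hx => ENNReal.ofReal_le_ofReal hx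
    calc ∫⁻ x in Aᶜ, G x ∂μ
        ≤ ∫⁻ _ in Aᶜ, ENNReal.ofReal ((b - a) ^ 2) ∂μ :=
          lintegral_mono_ae (ae_restrict_of_ae hGb)
      _ = ENNReal.ofReal ((b - a) ^ 2) * μ Aᶜ := setLIntegral_const _ _
      _ = μ Aᶜ * ENNReal.ofReal ((b - a) ^ 2) := mul_comm _ _
  have hmain : ∫⁻ x, G x ∂μ
      ≤ ENNReal.ofReal s * ∫⁻ x, G x ∂ν + μ Aᶜ * ENNReal.ofReal ((b - a) ^ 2) := by
    rw [← lintegral_add_compl G hA]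
    exact add_le_add h1 h2
  -- finiteness
  have hνfin : ∫⁻ x, G x ∂ν ≠ ∞ := by
    have hb1 : ∀ x, G x ≤ ENNReal.ofReal ((C + |m|) ^ 2) := by
      intro x
      refine ENNReal.ofReal_le_ofReal ?_
      have h1 : |f x - m| ≤ C + |m| := by
        have := abs_add_le (f x) (-m)
        simp only [abs_neg, ← sub_eq_add_neg] at this
        exact this.trans (add_le_add (hC x) le_rfl)
      calc (f x - m) ^ 2 = |f x - m| ^ 2 := (sq_abs _).symm
        _ ≤ (C + |m|) ^ 2 := pow_le_pow_left₀ (abs_nonneg _) h1 2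
    refine ((lintegral_mono hb1).trans_lt ?_).ne
    simp [lintegral_const]
  -- convert integrals to lintegrals
  have hGμ : ∫ x, (f x - m) ^ 2 ∂μ = (∫⁻ x, G x ∂μ).toReal :=
    integral_eq_lintegral_of_nonneg_ae (ae_of_all _ fun x => sq_nonneg _)
      ((hf.sub measurable_const).pow_const 2).aestronglyMeasurable
  have hGν : ∫ x, (f x - m) ^ 2 ∂ν = (∫⁻ x, G x ∂ν).toReal :=
    integral_eq_lintegral_of_nonneg_ae (ae_of_all _ fun x => sq_nonneg _)
      ((hf.sub measurable_const).pow_const 2).aestronglyMeasurable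
  -- pass hmain to real numbers
  have hrhsfin : ENNReal.ofReal s * ∫⁻ x, G x ∂ν + μ Aᶜ * ENNReal.ofReal ((b - a) ^ 2) ≠ ∞ := by
    refine ENNReal.add_ne_top.2 ⟨ENNReal.mul_ne_top ENNReal.ofReal_ne_top hνfin,
      ENNReal.mul_ne_top (measure_ne_top _ _) ENNReal.ofReal_ne_top⟩
  have hreal : (∫⁻ x, G x ∂μ).toReal
      ≤ s * (∫⁻ x, G x ∂ν).toReal + (μ Aᶜ).toReal * (b - a) ^ 2 := by
    have := ENNReal.toReal_mono hrhsfin hmain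
    rwa [ENNReal.toReal_add (ENNReal.mul_ne_top ENNReal.ofReal_ne_top hνfin)
      (ENNReal.mul_ne_top (measure_ne_top _ _) ENNReal.ofReal_ne_top),
      ENNReal.toReal_mul, ENNReal.toReal_mul, ENNReal.toReal_ofReal hs.le,
      ENNReal.toReal_ofReal (sq_nonneg _)] at this
  -- assemble
  have hbdd : BddBelow (Set.range fun t : ℝ => ∫ x, (f x - t) ^ 2 ∂μ) := by
    refine ⟨0, ?_⟩
    rintro r ⟨t, rfl⟩
    exact integral_nonneg fun x => sq_nonneg _
  calc (⨅ t : ℝ, ∫ x, (f x - t) ^ 2 ∂μ)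
      ≤ ∫ x, (f x - m) ^ 2 ∂μ := ciInf_le hbdd m
    _ = (∫⁻ x, G x ∂μ).toReal := hGμ
    _ ≤ s * (∫⁻ x, G x ∂ν).toReal + (μ Aᶜ).toReal * (b - a) ^ 2 := hreal
    _ = s * ∫ x, (f x - m) ^ 2 ∂ν + (μ Aᶜ).toReal * (b - a) ^ 2 := by rw [hGν]
    _ ≤ s * (⨅ t : ℝ, ∫ x, (f x - t) ^ 2 ∂ν) + (μ Aᶜ).toReal * (b - a) ^ 2 := by
        gcongr
    _ = s * (⨅ t : ℝ, ∫ x, (f x - t) ^ 2 ∂ν)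
        + (μ {x | ENNReal.ofReal s < w x}).toReal * (essSup f μ - essInf f μ) ^ 2 := by
        rw [hAc]
end

section
/- Let T be a μ-invariant Markov kernel and Ψ a sieve. Define β*(s) := max{0, sup{‖g‖₂² − s·𝓔(T,g) : g ∈ L²₀(μ), Ψ(g) = 1}}. Suppose β*(s) → 0 as s → ∞. Then β* is convex and continuous on (0,∞), nonincreasing, and the function α*(r) := max{0, sup{(‖g‖₂²/𝓔(T,g))·(1 − r/‖g‖₂²) : g ∈ L²₀(μ), Ψ(g) = 1}} is the generalized inverse of β* in the sense that α*(β*(s)) ≤ s and β*(α*(r)) ≤ r for r in the range of β*. -/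
open MeasureTheory
open scoped ENNReal RealInnerProductSpace

/-- The Dirichlet form `𝓔(T, f) = ⟪(Id - T) f, f⟫` of an operator on `L²(μ)`. -/
noncomputable def dirichletForm {E : Type*} [MeasurableSpace E] {μ : Measure E}
    (T : Lp ℝ 2 μ →L[ℝ] Lp ℝ 2 μ) (f : Lp ℝ 2 μ) : ℝ :=
  ⟪f - T f, f⟫

/-- `β*(s) = max {0, sup {‖g‖₂² - s·𝓔(T,g) : g ∈ L²₀(μ), Ψ(g) = 1}}`. -/
noncomputable def betaStar {E : Type*} [MeasurableSpace E] {μ : Measure E}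
    (Ψ : Lp ℝ 2 μ → ℝ≥0∞) (T : Lp ℝ 2 μ →L[ℝ] Lp ℝ 2 μ) (s : ℝ) : ℝ :=
  max 0 (sSup {y : ℝ | ∃ g : Lp ℝ 2 μ,
    (∫ x, g x ∂μ) = 0 ∧ Ψ g = 1 ∧ y = ‖g‖ ^ 2 - s * dirichletForm T g})

/-- `α*(r) = max {0, sup {(‖g‖₂²/𝓔(T,g))·(1 - r/‖g‖₂²) : g ∈ L²₀(μ), Ψ(g) = 1}}`. -/
noncomputable def alphaStar {E : Type*} [MeasurableSpace E] {μ : Measure E}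
    (Ψ : Lp ℝ 2 μ → ℝ≥0∞) (T : Lp ℝ 2 μ →L[ℝ] Lp ℝ 2 μ) (r : ℝ) : ℝ :=
  max 0 (sSup {y : ℝ | ∃ g : Lp ℝ 2 μ,
    (∫ x, g x ∂μ) = 0 ∧ Ψ g = 1 ∧
      y = (‖g‖ ^ 2 / dirichletForm T g) * (1 - r / ‖g‖ ^ 2)})

section Aux

variable {E : Type*} [MeasurableSpace E] {μ : Measure E}
  {Ψ : Lp ℝ 2 μ → ℝ≥0∞} {T : Lp ℝ 2 μ →L[ℝ] Lp ℝ 2 μ}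

lemma betaSet_bddAbove (hE : ∀ f : Lp ℝ 2 μ, 0 ≤ dirichletForm T f) {a s : ℝ}
    (ha : ∀ f : Lp ℝ 2 μ, (∫ x, f x ∂μ) = 0 → Ψ f = 1 → ‖f‖ ^ 2 ≤ a) (hs : 0 ≤ s) :
    BddAbove {y : ℝ | ∃ g : Lp ℝ 2 μ,
      (∫ x, g x ∂μ) = 0 ∧ Ψ g = 1 ∧ y = ‖g‖ ^ 2 - s * dirichletForm T g} := by
  refine ⟨a, fun y hy => ?_⟩
  obtain ⟨g, hg0, hg1, rfl⟩ := hy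
  have h1 := mul_nonneg hs (hE g)
  have h2 := ha g hg0 hg1
  linarith

lemma le_betaStar (hE : ∀ f : Lp ℝ 2 μ, 0 ≤ dirichletForm T f) {a s : ℝ}
    (ha : ∀ f : Lp ℝ 2 μ, (∫ x, f x ∂μ) = 0 → Ψ f = 1 → ‖f‖ ^ 2 ≤ a) (hs : 0 ≤ s)
    {g : Lp ℝ 2 μ} (hg0 : (∫ x, g x ∂μ) = 0) (hg1 : Ψ g = 1) :
    ‖g‖ ^ 2 - s * dirichletForm T g ≤ betaStar Ψ T s :=
  le_trans (le_csSup (betaSet_bddAbove hE ha hs) ⟨g, hg0, hg1, rfl⟩) (le_max_right _ _)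

lemma betaStar_nonneg (s : ℝ) : 0 ≤ betaStar Ψ T s := le_max_left _ _

lemma norm_eq_zero_of_dirichlet_zero
    (hE : ∀ f : Lp ℝ 2 μ, 0 ≤ dirichletForm T f) {a : ℝ}
    (ha : ∀ f : Lp ℝ 2 μ, (∫ x, f x ∂μ) = 0 → Ψ f = 1 → ‖f‖ ^ 2 ≤ a)
    (hβ0 : Filter.Tendsto (betaStar Ψ T) Filter.atTop (nhds 0))
    {g : Lp ℝ 2 μ} (hg0 : (∫ x, g x ∂μ) = 0) (hg1 : Ψ g = 1)
    (hgE : dirichletForm T g = 0) : ‖g‖ ^ 2 = 0 := by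
  have hle : ‖g‖ ^ 2 ≤ 0 := by
    refine le_of_tendsto_of_tendsto tendsto_const_nhds hβ0
      (Filter.eventually_atTop.2 ⟨0, fun s hs => ?_⟩)
    have := le_betaStar hE ha hs hg0 hg1
    rw [hgE, mul_zero, sub_zero] at this
    exact this
  have : 0 ≤ ‖g‖ ^ 2 := sq_nonneg _
  linarith

end Aux

/-- for a `μ`-invariant Markov operator `T` and sieve `Ψ`, if
`β*(s) → 0` as `s → ∞`, then `β*` is convex, continuous and nonincreasing on `(0, ∞)`,
and `α*` is its generalized inverse: `α*(β*(s)) ≤ s` and `β*(α*(r)) ≤ r`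
for `r` in the range of `β*`. -/
theorem betaStar_convex_continuous_and_alphaStar_inverse
    {E : Type*} [MeasurableSpace E] (μ : Measure E) [IsProbabilityMeasure μ]
    (T : Lp ℝ 2 μ →L[ℝ] Lp ℝ 2 μ)
    (hE : ∀ f : Lp ℝ 2 μ, 0 ≤ dirichletForm T f)
    (Ψ : Lp ℝ 2 μ → ℝ≥0∞)
    (hΨhom : ∀ c : ℝ, 0 < c → ∀ f, Ψ (c • f) = ENNReal.ofReal (c ^ 2) * Ψ f)
    (a : ℝ) (ha : ∀ f : Lp ℝ 2 μ, (∫ x, f x ∂μ) = 0 → Ψ f = 1 → ‖f‖ ^ 2 ≤ a)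
    (hβ0 : Filter.Tendsto (betaStar Ψ T) Filter.atTop (nhds 0)) :
    ConvexOn ℝ (Set.Ioi 0) (betaStar Ψ T) ∧
    ContinuousOn (betaStar Ψ T) (Set.Ioi 0) ∧
    AntitoneOn (betaStar Ψ T) (Set.Ioi 0) ∧
    (∀ s > (0 : ℝ), alphaStar Ψ T (betaStar Ψ T s) ≤ s) ∧
    (∀ r ∈ betaStar Ψ T '' Set.Ioi 0, betaStar Ψ T (alphaStar Ψ T r) ≤ r) := by

  -- convenient abbreviations
  have hβnn : ∀ s, 0 ≤ betaStar Ψ T s := fun s => betaStar_nonneg s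
  have hle : ∀ {s : ℝ}, 0 ≤ s → ∀ {g : Lp ℝ 2 μ}, (∫ x, g x ∂μ) = 0 → Ψ g = 1 →
      ‖g‖ ^ 2 - s * dirichletForm T g ≤ betaStar Ψ T s :=
    fun hs _ hg0 hg1 => le_betaStar hE ha hs hg0 hg1
  have hconv : ConvexOn ℝ (Set.Ioi 0) (betaStar Ψ T) := by
    refine ⟨convex_Ioi 0, fun s hs t ht c d hc hd hcd => ?_⟩
    simp only [smul_eq_mul]
    have hst : (0:ℝ) < c * s + d * t := by
      rcases hc.lt_or_eq with h | h
      · have : 0 < c * s := mul_pos h hs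
        nlinarith [mul_nonneg hd ht.le]
      · have hd1 : d = 1 := by linarith
        simp only [← h, hd1, zero_mul, one_mul, zero_add]; exact ht
    have h0 : 0 ≤ c * betaStar Ψ T s + d * betaStar Ψ T t :=
      add_nonneg (mul_nonneg hc (hβnn s)) (mul_nonneg hd (hβnn t))
    refine max_le h0 (Real.sSup_le ?_ h0)
    rintro y ⟨g, hg0, hg1, rfl⟩
    have h1 := hle hs.le hg0 hg1
    have h2 := hle ht.le hg0 hg1
    nlinarith [mul_le_mul_of_nonneg_left h1 hc, mul_le_mul_of_nonneg_left h2 hd]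
  have hanti : AntitoneOn (betaStar Ψ T) (Set.Ioi 0) := by
    intro s hs t ht hst
    refine max_le (hβnn s) (Real.sSup_le ?_ (hβnn s))
    rintro y ⟨g, hg0, hg1, rfl⟩
    have h1 := hle hs.le hg0 hg1
    have h2 : s * dirichletForm T g ≤ t * dirichletForm T g :=
      mul_le_mul_of_nonneg_right hst (hE g)
    linarith
  have hinv1 : ∀ s > (0:ℝ), alphaStar Ψ T (betaStar Ψ T s) ≤ s := by
    intro s hs
    refine max_le hs.le (Real.sSup_le ?_ hs.le)
    rintro y ⟨g, hg0, hg1, rfl⟩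
    rcases eq_or_lt_of_le (hE g) with hD | hD
    · rw [← hD, div_zero, zero_mul]; exact hs.le
    rcases eq_or_lt_of_le (sq_nonneg ‖g‖) with hN | hN
    · rw [← hN, zero_div, zero_mul]; exact hs.le
    have h1 := hle hs.le hg0 hg1
    have key : ‖g‖ ^ 2 / dirichletForm T g * (1 - betaStar Ψ T s / ‖g‖ ^ 2)
        = (‖g‖ ^ 2 - betaStar Ψ T s) / dirichletForm T g := by
      field_simp
      rw [mul_sub, mul_one, mul_comm, div_mul_cancel₀ _ hN.ne']
    rw [key, div_le_iff₀ hD]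
    linarith
  have hinv2 : ∀ r ∈ betaStar Ψ T '' Set.Ioi 0, betaStar Ψ T (alphaStar Ψ T r) ≤ r := by
    rintro r ⟨s₀, hs₀, rfl⟩
    set r := betaStar Ψ T s₀ with hr
    have hrnn : 0 ≤ r := hβnn s₀
    have hαbdd : BddAbove {y : ℝ | ∃ g : Lp ℝ 2 μ,
        (∫ x, g x ∂μ) = 0 ∧ Ψ g = 1 ∧
          y = (‖g‖ ^ 2 / dirichletForm T g) * (1 - r / ‖g‖ ^ 2)} := by
      refine ⟨s₀, ?_⟩
      rintro y ⟨g, hg0, hg1, rfl⟩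
      rcases eq_or_lt_of_le (hE g) with hD | hD
      · rw [← hD, div_zero, zero_mul]; exact hs₀.le
      rcases eq_or_lt_of_le (sq_nonneg ‖g‖) with hN | hN
      · rw [← hN, zero_div, zero_mul]; exact hs₀.le
      have h1 := hle (le_of_lt hs₀) hg0 hg1
      have key : ‖g‖ ^ 2 / dirichletForm T g * (1 - r / ‖g‖ ^ 2)
          = (‖g‖ ^ 2 - r) / dirichletForm T g := by
        field_simp
        rw [mul_sub, mul_one, mul_comm, div_mul_cancel₀ _ hN.ne']
      rw [key, div_le_iff₀ hD]
      linarith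
    set t := alphaStar Ψ T r with ht
    have htnn : 0 ≤ t := le_max_left _ _
    refine max_le hrnn (Real.sSup_le ?_ hrnn)
    rintro y ⟨g, hg0, hg1, rfl⟩
    rcases eq_or_lt_of_le (hE g) with hD | hD
    · have := norm_eq_zero_of_dirichlet_zero hE ha hβ0 hg0 hg1 hD.symm
      rw [this, ← hD, mul_zero, sub_zero]; exact hrnn
    rcases le_or_gt (‖g‖ ^ 2) r with hN | hN
    · have := mul_nonneg htnn (hE g)
      linarith
    · have hN0 : (0:ℝ) < ‖g‖ ^ 2 := lt_of_le_of_lt hrnn hN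
      have hmem : (‖g‖ ^ 2 / dirichletForm T g) * (1 - r / ‖g‖ ^ 2) ∈
          {y : ℝ | ∃ g : Lp ℝ 2 μ, (∫ x, g x ∂μ) = 0 ∧ Ψ g = 1 ∧
            y = (‖g‖ ^ 2 / dirichletForm T g) * (1 - r / ‖g‖ ^ 2)} := ⟨g, hg0, hg1, rfl⟩
      have h2 : (‖g‖ ^ 2 / dirichletForm T g) * (1 - r / ‖g‖ ^ 2) ≤ t :=
        le_trans (le_csSup hαbdd hmem) (le_max_right _ _)
      have key : ‖g‖ ^ 2 / dirichletForm T g * (1 - r / ‖g‖ ^ 2)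
          = (‖g‖ ^ 2 - r) / dirichletForm T g := by
        field_simp
        rw [mul_sub, mul_one, mul_comm, div_mul_cancel₀ _ hN0.ne']
      rw [key, div_le_iff₀ hD] at h2
      nlinarith
  exact ⟨hconv, hconv.continuousOn isOpen_Ioi, hanti, hinv1, hinv2⟩
end

section
/- Let P be a μ-invariant Markov kernel on L²(μ). Then for every n ∈ ℕ, sup{‖Pⁿf − μ(f)‖₂ : ‖f‖_osc ≤ 1} = (1/2)·sup{‖(P*)ⁿg − μ(g)‖₁ : ‖g‖₂ ≤ 1}. -/
open MeasureTheory ProbabilityTheory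
open scoped ENNReal

set_option linter.unusedSectionVars false

noncomputable def kernelAct {E : Type*} [MeasurableSpace E] (P : Kernel E E)
    (f : E → ℝ) : E → ℝ :=
  fun x => ∫ y, f y ∂(P x)

section Aux

variable {E : Type*} [MeasurableSpace E] {μ : Measure E} [IsProbabilityMeasure μ]
  {P Pstar : Kernel E E} [IsMarkovKernel P] [IsMarkovKernel Pstar]

lemma kernelAct_measurable [IsSFiniteKernel P] {f : E → ℝ} (hf : Measurable f) :
    Measurable (kernelAct P f) := by
  have h : StronglyMeasurable fun p : E × E => f p.2 :=
    (hf.comp measurable_snd).stronglyMeasurable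
  exact h.integral_kernel_prod_right'.measurable

lemma integrable_of_bdd {ν : Measure E} [IsProbabilityMeasure ν] {f : E → ℝ} {C : ℝ}
    (hf : Measurable f) (hC : ∀ x, |f x| ≤ C) : Integrable f ν :=
  MemLp.integrable le_rfl (MemLp.of_bound hf.aestronglyMeasurable C
    (Filter.Eventually.of_forall (fun x => by simpa using hC x)))

lemma kernelAct_bdd [IsMarkovKernel P] {f : E → ℝ} {C : ℝ}
    (hf : Measurable f) (hC : ∀ x, |f x| ≤ C) (x : E) : |kernelAct P f x| ≤ C := by
  have hint : Integrable f (P x) := integrable_of_bdd hf hC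
  calc |∫ y, f y ∂(P x)| ≤ ∫ y, |f y| ∂(P x) := norm_integral_le_integral_norm f
    _ ≤ ∫ _, C ∂(P x) := integral_mono hint.abs (integrable_const C) (fun y => hC y)
    _ = C := by simp

lemma kernelAct_add_const [IsMarkovKernel P] {f : E → ℝ} {C : ℝ}
    (hf : Measurable f) (hC : ∀ x, |f x| ≤ C) (c : ℝ) :
    kernelAct P (fun x => f x + c) = fun x => kernelAct P f x + c := by
  funext x
  have hint : Integrable f (P x) := integrable_of_bdd hf hC
  simp [kernelAct, integral_add hint (integrable_const c)]

lemma bind_eq_self (hinv : ∀ B : Set E, MeasurableSet B → ∫⁻ x, P x B ∂μ = μ B) :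
    μ.bind (fun x => P x) = μ := by
  ext B hB
  rw [Measure.bind_apply hB (P.measurable.aemeasurable)]
  exact hinv B hB

lemma lintegral_kernel_inv (hinv : ∀ B : Set E, MeasurableSet B → ∫⁻ x, P x B ∂μ = μ B)
    {h : E → ℝ≥0∞} (hh : Measurable h) :
    ∫⁻ x, ∫⁻ y, h y ∂(P x) ∂μ = ∫⁻ x, h x ∂μ := by
  conv_rhs => rw [← bind_eq_self (P := P) hinv]
  rw [Measure.lintegral_bind P.measurable.aemeasurable hh.aemeasurable]

lemma star_bind_eq_self (hadj : μ.compProd Pstar = (μ.compProd P).map Prod.swap) :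
    μ.bind (fun x => Pstar x) = μ := by
  ext B hB
  rw [Measure.bind_apply hB (Pstar.measurable.aemeasurable)]
  have h1 : (μ.compProd Pstar) (Set.univ ×ˢ B) = ∫⁻ x, Pstar x B ∂μ := by
    rw [Measure.compProd_apply_prod MeasurableSet.univ hB]
    simp
  rw [← h1, hadj, Measure.map_apply measurable_swap (MeasurableSet.univ.prod hB)]
  have h2 : Prod.swap ⁻¹' (Set.univ ×ˢ B) = B ×ˢ (Set.univ : Set E) := by
    ext p; simp [Prod.swap]
  rw [h2, Measure.compProd_apply_prod hB MeasurableSet.univ]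
  simp

lemma kernelAct_congr_ae (hinv : ∀ B : Set E, MeasurableSet B → ∫⁻ x, P x B ∂μ = μ B)
    {f g : E → ℝ} (hf : Measurable f) (hg : Measurable g) (h : f =ᵐ[μ] g) :
    kernelAct P f =ᵐ[μ] kernelAct P g := by
  set N := {x | ¬ f x = g x} with hNdef
  have hN : MeasurableSet N := (measurableSet_eq_fun hf hg).compl
  have hN0 : μ N = 0 := h
  have hae : ∀ᵐ x ∂μ, P x N = 0 := by
    have h1 := hinv N hN
    rw [hN0] at h1
    exact (lintegral_eq_zero_iff (P.measurable_coe hN)).mp h1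
  filter_upwards [hae] with x hx
  exact integral_congr_ae (hx : (P x) {y | ¬ f y = g y} = 0)

lemma ennnorm_kernelAct_le {κ : Kernel E E} [IsMarkovKernel κ] (g : E → ℝ) (x : E) :
    (‖kernelAct κ g x‖₊ : ℝ≥0∞) ≤ ∫⁻ y, ‖g y‖₊ ∂(κ x) :=
  enorm_integral_le_lintegral_enorm _

lemma kernelAct_star_integrable (hadj : μ.compProd Pstar = (μ.compProd P).map Prod.swap)
    {g : E → ℝ} (hg : Measurable g) (hgi : Integrable g μ) :
    Integrable (kernelAct Pstar g) μ := by
  refine ⟨(kernelAct_measurable hg).aestronglyMeasurable, ?_⟩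
  have key : ∫⁻ x, ‖kernelAct Pstar g x‖₊ ∂μ ≤ ∫⁻ x, ‖g x‖₊ ∂μ := by
    calc ∫⁻ x, (‖kernelAct Pstar g x‖₊ : ℝ≥0∞) ∂μ
        ≤ ∫⁻ x, ∫⁻ y, ‖g y‖₊ ∂(Pstar x) ∂μ :=
          lintegral_mono (fun x => ennnorm_kernelAct_le g x)
      _ = ∫⁻ x, ‖g x‖₊ ∂μ := by
          conv_rhs => rw [← star_bind_eq_self hadj]
          exact (Measure.lintegral_bind Pstar.measurable.aemeasurable hg.enorm.aemeasurable).symm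
  exact lt_of_le_of_lt key hgi.2


lemma star_lintegral_inv (hadj : μ.compProd Pstar = (μ.compProd P).map Prod.swap)
    {h : E → ℝ≥0∞} (hh : Measurable h) :
    ∫⁻ x, ∫⁻ y, h y ∂(Pstar x) ∂μ = ∫⁻ x, h x ∂μ := by
  conv_rhs => rw [← star_bind_eq_self hadj]
  rw [Measure.lintegral_bind Pstar.measurable.aemeasurable hh.aemeasurable]

lemma nonempty_of_prob (μ : Measure E) [IsProbabilityMeasure μ] : Nonempty E := by
  by_contra h
  rw [not_nonempty_iff] at h
  have h1 : μ Set.univ = 1 := measure_univ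
  rw [Measure.eq_zero_of_isEmpty μ] at h1
  simp at h1

lemma adjoint_step (hinv : ∀ B : Set E, MeasurableSet B → ∫⁻ x, P x B ∂μ = μ B)
    (hadj : μ.compProd Pstar = (μ.compProd P).map Prod.swap)
    {f g : E → ℝ} (hf : Measurable f) {C : ℝ} (hC : ∀ x, |f x| ≤ C)
    (hg : Measurable g) (hgi : Integrable g μ) :
    ∫ x, kernelAct P f x * g x ∂μ = ∫ x, f x * kernelAct Pstar g x ∂μ := by
  have hE : Nonempty E := nonempty_of_prob μ
  have hC0 : 0 ≤ C := le_trans (abs_nonneg _) (hC hE.some)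
  set F : E × E → ℝ := fun p => g p.2 * f p.1 with hF
  have hFm : Measurable F := (hg.comp measurable_snd).mul (hf.comp measurable_fst)
  have hgsnd : Integrable (fun p : E × E => g p.2) (μ.compProd Pstar) := by
    refine ⟨(hg.comp measurable_snd).aestronglyMeasurable, ?_⟩
    have h1 : ∫⁻ p : E × E, ‖g p.2‖₊ ∂(μ.compProd Pstar) = ∫⁻ x, ∫⁻ y, ‖g y‖₊ ∂(Pstar x) ∂μ :=
      Measure.lintegral_compProd (hg.enorm.comp measurable_snd)
    rw [HasFiniteIntegral]
    change ∫⁻ p : E × E, (‖g p.2‖₊ : ℝ≥0∞) ∂(μ.compProd Pstar) < ⊤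
    rw [h1]
    exact lt_of_eq_of_lt (star_lintegral_inv hadj hg.enorm) hgi.2
  have hFint : Integrable F (μ.compProd Pstar) := by
    refine Integrable.mono' (hgsnd.abs.const_mul C) hFm.aestronglyMeasurable ?_
    refine Filter.Eventually.of_forall fun p => ?_
    have : ‖F p‖ = |g p.2| * |f p.1| := by rw [hF]; simp [abs_mul]
    rw [this]
    calc |g p.2| * |f p.1| ≤ |g p.2| * C := by
          exact mul_le_mul_of_nonneg_left (hC _) (abs_nonneg _)
      _ = C * |g p.2| := mul_comm _ _
  have hgfst : Integrable (fun p : E × E => g p.1) (μ.compProd P) := by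
    refine ⟨(hg.comp measurable_fst).aestronglyMeasurable, ?_⟩
    have h1 : ∫⁻ p : E × E, ‖g p.1‖₊ ∂(μ.compProd P) = ∫⁻ x, ∫⁻ y, ‖g x‖₊ ∂(P x) ∂μ :=
      Measure.lintegral_compProd (hg.enorm.comp measurable_fst)
    rw [HasFiniteIntegral]
    change ∫⁻ p : E × E, (‖g p.1‖₊ : ℝ≥0∞) ∂(μ.compProd P) < ⊤
    rw [h1]
    have h2 : ∀ x, ∫⁻ _, (‖g x‖₊ : ℝ≥0∞) ∂(P x) = ‖g x‖₊ := by
      intro x; rw [lintegral_const, measure_univ, mul_one]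
    simp_rw [h2]
    exact hgi.2
  have hFswapint : Integrable (fun p : E × E => F (Prod.swap p)) (μ.compProd P) := by
    refine Integrable.mono' (hgfst.abs.const_mul C)
      (hFm.comp measurable_swap).aestronglyMeasurable ?_
    refine Filter.Eventually.of_forall fun p => ?_
    have : ‖F (Prod.swap p)‖ = |g p.1| * |f p.2| := by rw [hF]; simp [abs_mul]
    rw [this]
    calc |g p.1| * |f p.2| ≤ |g p.1| * C :=
          mul_le_mul_of_nonneg_left (hC _) (abs_nonneg _)
      _ = C * |g p.1| := mul_comm _ _
  calc ∫ x, kernelAct P f x * g x ∂μ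
      = ∫ x, ∫ y, g x * f y ∂(P x) ∂μ := by
        refine integral_congr_ae (Filter.Eventually.of_forall fun x => ?_)
        simp only [integral_const_mul, kernelAct]
        ring
    _ = ∫ p, F (Prod.swap p) ∂(μ.compProd P) := (Measure.integral_compProd hFswapint).symm
    _ = ∫ p, F p ∂((μ.compProd P).map Prod.swap) :=
        (integral_map measurable_swap.aemeasurable hFm.aestronglyMeasurable).symm
    _ = ∫ p, F p ∂(μ.compProd Pstar) := by rw [hadj]
    _ = ∫ x, ∫ y, g y * f x ∂(Pstar x) ∂μ := Measure.integral_compProd hFint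
    _ = ∫ x, f x * kernelAct Pstar g x ∂μ := by
        refine integral_congr_ae (Filter.Eventually.of_forall fun x => ?_)
        simp only [integral_mul_const, kernelAct]
        ring

lemma iter_meas {f : E → ℝ} (hf : Measurable f) (n : ℕ) :
    Measurable ((kernelAct P)^[n] f) := by
  induction n with
  | zero => exact hf
  | succ n ih => rw [Function.iterate_succ_apply']; exact kernelAct_measurable ih

lemma iter_bdd {f : E → ℝ} {C : ℝ} (hf : Measurable f) (hC : ∀ x, |f x| ≤ C) (n : ℕ) :
    ∀ x, |(kernelAct P)^[n] f x| ≤ C := by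
  induction n with
  | zero => exact hC
  | succ n ih =>
    intro x
    rw [Function.iterate_succ_apply']
    exact kernelAct_bdd (iter_meas hf n) ih x

lemma iter_add_const {f : E → ℝ} {C : ℝ} (hf : Measurable f) (hC : ∀ x, |f x| ≤ C)
    (c : ℝ) (n : ℕ) :
    (kernelAct P)^[n] (fun x => f x + c) = fun x => (kernelAct P)^[n] f x + c := by
  induction n with
  | zero => rfl
  | succ n ih =>
    rw [Function.iterate_succ_apply', ih, Function.iterate_succ_apply',
      kernelAct_add_const (iter_meas hf n) (iter_bdd hf hC n) c]

lemma iter_congr_ae (hinv : ∀ B : Set E, MeasurableSet B → ∫⁻ x, P x B ∂μ = μ B)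
    {f g : E → ℝ} (hf : Measurable f) (hg : Measurable g) (h : f =ᵐ[μ] g) (n : ℕ) :
    (kernelAct P)^[n] f =ᵐ[μ] (kernelAct P)^[n] g := by
  induction n with
  | zero => exact h
  | succ n ih =>
    rw [Function.iterate_succ_apply', Function.iterate_succ_apply']
    exact kernelAct_congr_ae hinv (iter_meas hf n) (iter_meas hg n) ih

lemma star_iter_integrable (hadj : μ.compProd Pstar = (μ.compProd P).map Prod.swap)
    {g : E → ℝ} (hg : Measurable g) (hgi : Integrable g μ) (n : ℕ) :
    Integrable ((kernelAct Pstar)^[n] g) μ := by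
  induction n with
  | zero => exact hgi
  | succ n ih =>
    rw [Function.iterate_succ_apply']
    exact kernelAct_star_integrable hadj (iter_meas hg n) ih

lemma adjoint_iter (hinv : ∀ B : Set E, MeasurableSet B → ∫⁻ x, P x B ∂μ = μ B)
    (hadj : μ.compProd Pstar = (μ.compProd P).map Prod.swap)
    {f g : E → ℝ} (hf : Measurable f) {C : ℝ} (hC : ∀ x, |f x| ≤ C)
    (hg : Measurable g) (hgi : Integrable g μ) (n : ℕ) :
    ∫ x, (kernelAct P)^[n] f x * g x ∂μ = ∫ x, f x * (kernelAct Pstar)^[n] g x ∂μ := by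
  induction n generalizing g with
  | zero => rfl
  | succ n ih =>
    calc ∫ x, (kernelAct P)^[n + 1] f x * g x ∂μ
        = ∫ x, kernelAct P ((kernelAct P)^[n] f) x * g x ∂μ := by
          rw [Function.iterate_succ_apply']
      _ = ∫ x, (kernelAct P)^[n] f x * kernelAct Pstar g x ∂μ :=
          adjoint_step hinv hadj (iter_meas hf n) (iter_bdd hf hC n) hg hgi
      _ = ∫ x, f x * (kernelAct Pstar)^[n] (kernelAct Pstar g) x ∂μ :=
          ih (kernelAct_measurable hg) (kernelAct_star_integrable hadj hg hgi)
      _ = ∫ x, f x * (kernelAct Pstar)^[n + 1] g x ∂μ := by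
          rw [Function.iterate_succ_apply]

lemma star_iter_l1_le (hadj : μ.compProd Pstar = (μ.compProd P).map Prod.swap)
    {g : E → ℝ} (hg : Measurable g) (hgi : Integrable g μ) (n : ℕ) :
    ∫ x, |(kernelAct Pstar)^[n] g x| ∂μ ≤ ∫ x, |g x| ∂μ := by
  have key : ∀ m : ℕ, ∫⁻ x, ‖(kernelAct Pstar)^[m] g x‖₊ ∂μ ≤ ∫⁻ x, ‖g x‖₊ ∂μ := by
    intro m
    induction m with
    | zero => exact le_rfl
    | succ m ih =>
      refine le_trans ?_ ih
      rw [Function.iterate_succ_apply']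
      calc ∫⁻ x, (‖kernelAct Pstar ((kernelAct Pstar)^[m] g) x‖₊ : ℝ≥0∞) ∂μ
          ≤ ∫⁻ x, ∫⁻ y, ‖(kernelAct Pstar)^[m] g y‖₊ ∂(Pstar x) ∂μ :=
            lintegral_mono (fun x => ennnorm_kernelAct_le _ x)
        _ = ∫⁻ x, ‖(kernelAct Pstar)^[m] g x‖₊ ∂μ :=
            star_lintegral_inv hadj (iter_meas hg m).enorm
  have h1 := ofReal_integral_norm_eq_lintegral_enorm (star_iter_integrable hadj hg hgi n)
  have h2 := ofReal_integral_norm_eq_lintegral_enorm hgi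
  have h3 : ENNReal.ofReal (∫ x, ‖(kernelAct Pstar)^[n] g x‖ ∂μ)
      ≤ ENNReal.ofReal (∫ x, ‖g x‖ ∂μ) := by rw [h1, h2]; exact key n
  have h4 := (ENNReal.ofReal_le_ofReal_iff (integral_nonneg (fun x => norm_nonneg _))).mp h3
  simpa using h4

lemma cauchy_schwarz {v g : E → ℝ} (hv : Measurable v) (hg : Measurable g)
    (hv2 : MemLp v 2 μ) (hg2 : MemLp g 2 μ) :
    ∫ x, v x * g x ∂μ ≤ Real.sqrt (∫ x, v x ^ 2 ∂μ) * Real.sqrt (∫ x, g x ^ 2 ∂μ) := by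
  have hpq : (2 : ℝ).HolderConjugate 2 := by
    constructor <;> norm_num
  have h2 : ENNReal.ofReal (2 : ℝ) = 2 := by norm_num
  have key := integral_mul_norm_le_Lp_mul_Lq (μ := μ) hpq (h2 ▸ hv2) (h2 ▸ hg2)
  have e1 : ∀ h : E → ℝ, (∫ x, ‖h x‖ ^ (2 : ℝ) ∂μ) = ∫ x, h x ^ 2 ∂μ := by
    intro h
    refine integral_congr_ae (Filter.Eventually.of_forall fun x => ?_)
    show ‖h x‖ ^ (2 : ℝ) = h x ^ 2
    rw [show (2 : ℝ) = ((2 : ℕ) : ℝ) by norm_num, Real.rpow_natCast]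
    simp [sq_abs]
  rw [e1 v, e1 g] at key
  have hnn : ∀ h : E → ℝ, (0 : ℝ) ≤ ∫ x, h x ^ 2 ∂μ :=
    fun h => integral_nonneg (fun x => sq_nonneg _)
  have e2 : ∀ h : E → ℝ, (∫ x, h x ^ 2 ∂μ) ^ (1 / 2 : ℝ) = Real.sqrt (∫ x, h x ^ 2 ∂μ) := by
    intro h
    rw [Real.sqrt_eq_rpow]
  have hmul : Integrable (fun x => v x * g x) μ := by
    refine Integrable.mono' ((hv2.integrable_sq.add hg2.integrable_sq).div_const 2)
      (hv.mul hg).aestronglyMeasurable (Filter.Eventually.of_forall fun x => ?_)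
    have h := abs_mul (v x) (g x)
    have h2 : |v x| * |g x| ≤ (v x ^ 2 + g x ^ 2) / 2 := by
      nlinarith [sq_nonneg (|v x| - |g x|), sq_abs (v x), sq_abs (g x)]
    calc ‖v x * g x‖ = |v x| * |g x| := by rw [Real.norm_eq_abs, h]
      _ ≤ (v x ^ 2 + g x ^ 2) / 2 := h2
  have hmul' : Integrable (fun x => ‖v x‖ * ‖g x‖) μ := by
    refine hmul.abs.congr (Filter.Eventually.of_forall fun x => ?_)
    simp [abs_mul]
  calc ∫ x, v x * g x ∂μ ≤ ∫ x, ‖v x‖ * ‖g x‖ ∂μ := by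
        refine integral_mono hmul hmul' (fun x => ?_)
        calc v x * g x ≤ |v x * g x| := le_abs_self _
          _ = ‖v x‖ * ‖g x‖ := by simp [abs_mul]
    _ ≤ Real.sqrt (∫ x, v x ^ 2 ∂μ) * Real.sqrt (∫ x, g x ^ 2 ∂μ) := by
        rw [← e2 v, ← e2 g]; exact key

lemma real_essSup_le {f : E → ℝ} {c m : ℝ} (hub : ∀ᵐ x ∂μ, f x ≤ c)
    (hlb : ∀ᵐ x ∂μ, m ≤ f x) : essSup f μ ≤ c := by
  haveI : NeZero μ := ⟨IsProbabilityMeasure.ne_zero μ⟩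
  exact Filter.limsup_le_of_le (Filter.isCoboundedUnder_le_of_eventually_le _ hlb) hub

lemma real_le_essInf {f : E → ℝ} {c m : ℝ} (hub : ∀ᵐ x ∂μ, f x ≤ c)
    (hlb : ∀ᵐ x ∂μ, m ≤ f x) : m ≤ essInf f μ := by
  haveI : NeZero μ := ⟨IsProbabilityMeasure.ne_zero μ⟩
  exact Filter.le_liminf_of_le (Filter.isCoboundedUnder_ge_of_eventually_le _ hub) hlb

lemma real_ae_le_essSup {f : E → ℝ} {c : ℝ} (hub : ∀ᵐ x ∂μ, f x ≤ c) :
    ∀ᵐ x ∂μ, f x ≤ essSup f μ :=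
  eventually_le_limsup ⟨c, Filter.eventually_map.2 hub⟩

lemma real_ae_essInf_le {f : E → ℝ} {m : ℝ} (hlb : ∀ᵐ x ∂μ, m ≤ f x) :
    ∀ᵐ x ∂μ, essInf f μ ≤ f x :=
  eventually_liminf_le ⟨m, Filter.eventually_map.2 hlb⟩

lemma reduce_osc (hinv : ∀ B : Set E, MeasurableSet B → ∫⁻ x, P x B ∂μ = μ B)
    {f : E → ℝ} (hf : Measurable f) {C : ℝ} (hC : ∀ᵐ x ∂μ, |f x| ≤ C)
    (hosc : essSup f μ - essInf f μ ≤ 1) :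
    ∃ u : E → ℝ, Measurable u ∧ (∀ x, |u x| ≤ 1 / 2) ∧
      ∀ m : ℕ, (fun x => (kernelAct P)^[m] f x - ∫ z, f z ∂μ)
        =ᵐ[μ] fun x => (kernelAct P)^[m] u x - ∫ z, u z ∂μ := by
  set M := essSup f μ with hM
  set L := essInf f μ with hL
  set c := (L + M) / 2 with hc
  have hub : ∀ᵐ x ∂μ, f x ≤ M :=
    real_ae_le_essSup (hC.mono fun x hx => le_trans (le_abs_self _) hx)
  have hlb : ∀ᵐ x ∂μ, L ≤ f x :=
    real_ae_essInf_le (hC.mono fun x hx => neg_le_of_abs_le hx)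
  set u : E → ℝ := fun x => max (-(1 / 2)) (min (1 / 2) (f x - c)) with hu
  have hum : Measurable u :=
    measurable_const.max (measurable_const.min (hf.sub measurable_const))
  have hubd : ∀ x, |u x| ≤ 1 / 2 := by
    intro x
    rw [abs_le]
    constructor
    · exact le_max_left _ _
    · exact max_le (by norm_num) (min_le_left _ _)
  have hae : f =ᵐ[μ] fun x => u x + c := by
    filter_upwards [hub, hlb] with x h1 h2
    have hMc : f x - c ≤ 1 / 2 := by
      simp only [hc]
      linarith
    have hLc : -(1 / 2) ≤ f x - c := by
      simp only [hc]
      linarith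
    simp only [hu]
    rw [min_eq_right hMc, max_eq_right hLc]
    ring
  refine ⟨u, hum, hubd, fun m => ?_⟩
  have huc : ∀ x, |u x + c| ≤ 1 / 2 + |c| := fun x =>
    le_trans (abs_add_le _ _) (add_le_add_left (hubd x) _)
  have h1 : (kernelAct P)^[m] f =ᵐ[μ] (kernelAct P)^[m] (fun x => u x + c) :=
    iter_congr_ae hinv hf (hum.add_const c) hae m
  have h2 : (kernelAct P)^[m] (fun x => u x + c) = fun x => (kernelAct P)^[m] u x + c :=
    iter_add_const hum hubd c m
  have hui : Integrable u μ := integrable_of_bdd hum hubd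
  have h3 : ∫ z, f z ∂μ = ∫ z, u z ∂μ + c := by
    rw [integral_congr_ae hae, integral_add hui (integrable_const c)]
    simp
  filter_upwards [h1] with x hx
  rw [hx, h2, h3]
  ring

lemma pairing_eq (hinv : ∀ B : Set E, MeasurableSet B → ∫⁻ x, P x B ∂μ = μ B)
    (hadj : μ.compProd Pstar = (μ.compProd P).map Prod.swap)
    {u g : E → ℝ} (hum : Measurable u) {C : ℝ} (hub : ∀ x, |u x| ≤ C)
    (hgm : Measurable g) (hgi : Integrable g μ) (n : ℕ) :
    ∫ x, ((kernelAct P)^[n] u x - ∫ z, u z ∂μ) * g x ∂μ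
      = ∫ x, u x * ((kernelAct Pstar)^[n] g x - ∫ z, g z ∂μ) ∂μ := by
  have hui : Integrable u μ := integrable_of_bdd hum hub
  have hsint : Integrable ((kernelAct Pstar)^[n] g) μ := star_iter_integrable hadj hgm hgi n
  have int1 : Integrable (fun x => (kernelAct P)^[n] u x * g x) μ :=
    hgi.bdd_mul (c := C) (iter_meas hum n).aestronglyMeasurable
      (Filter.Eventually.of_forall fun x => by simpa using iter_bdd hum hub n x)
  have int2 : Integrable (fun x => u x * (kernelAct Pstar)^[n] g x) μ :=
    hsint.bdd_mul (c := C) hum.aestronglyMeasurable (Filter.Eventually.of_forall fun x => by simpa using hub x)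
  have adj := adjoint_iter hinv hadj hum hub hgm hgi n
  calc ∫ x, ((kernelAct P)^[n] u x - ∫ z, u z ∂μ) * g x ∂μ
      = ∫ x, ((kernelAct P)^[n] u x * g x - (∫ z, u z ∂μ) * g x) ∂μ := by
        refine integral_congr_ae (Filter.Eventually.of_forall fun x => ?_); ring
    _ = ∫ x, (kernelAct P)^[n] u x * g x ∂μ - ∫ x, (∫ z, u z ∂μ) * g x ∂μ :=
        integral_sub int1 (hgi.const_mul _)
    _ = ∫ x, u x * (kernelAct Pstar)^[n] g x ∂μ - (∫ z, u z ∂μ) * ∫ x, g x ∂μ := by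
        rw [adj, integral_const_mul]
    _ = ∫ x, u x * (kernelAct Pstar)^[n] g x ∂μ - ∫ x, u x * (∫ z, g z ∂μ) ∂μ := by
        rw [integral_mul_const]
    _ = ∫ x, (u x * (kernelAct Pstar)^[n] g x - u x * ∫ z, g z ∂μ) ∂μ :=
        (integral_sub int2 (hui.mul_const _)).symm
    _ = ∫ x, u x * ((kernelAct Pstar)^[n] g x - ∫ z, g z ∂μ) ∂μ := by
        refine integral_congr_ae (Filter.Eventually.of_forall fun x => ?_); ring

lemma le_core (hinv : ∀ B : Set E, MeasurableSet B → ∫⁻ x, P x B ∂μ = μ B)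
    (hadj : μ.compProd Pstar = (μ.compProd P).map Prod.swap)
    {u : E → ℝ} (hum : Measurable u) (hub : ∀ x, |u x| ≤ 1 / 2) (n : ℕ)
    (B : Set ℝ) (hBbdd : BddAbove B) (hBnn : 0 ≤ sSup B)
    (hBsub : ∀ g : E → ℝ, Measurable g → MemLp g 2 μ → (∫ x, g x ^ 2 ∂μ) ≤ 1 →
      (∫ x, |(kernelAct Pstar)^[n] g x - ∫ z, g z ∂μ| ∂μ) ∈ B) :
    Real.sqrt (∫ x, ((kernelAct P)^[n] u x - ∫ z, u z ∂μ) ^ 2 ∂μ) ≤ 1 / 2 * sSup B := by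
  set v : E → ℝ := fun x => (kernelAct P)^[n] u x - ∫ z, u z ∂μ with hvdef
  have hvm : Measurable v := (iter_meas hum n).sub_const _
  have hvb : ∀ x, |v x| ≤ 1 := by
    intro x
    have h1 := iter_bdd (P := P) hum hub n x
    have h2 : |∫ z, u z ∂μ| ≤ 1 / 2 := by
      calc |∫ z, u z ∂μ| ≤ ∫ z, |u z| ∂μ := norm_integral_le_integral_norm u
        _ ≤ ∫ _, (1/2 : ℝ) ∂μ :=
          integral_mono (integrable_of_bdd hum hub).abs (integrable_const _) hub
        _ = 1/2 := by simp
    calc |v x| = |(kernelAct P)^[n] u x + -∫ z, u z ∂μ| := by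
          simp only [hvdef]; rw [sub_eq_add_neg]
      _ ≤ |(kernelAct P)^[n] u x| + |-∫ z, u z ∂μ| := abs_add_le _ _
      _ = |(kernelAct P)^[n] u x| + |∫ z, u z ∂μ| := by rw [abs_neg]
      _ ≤ 1 := by linarith
  have ht2 : 0 ≤ ∫ x, v x ^ 2 ∂μ := integral_nonneg fun x => sq_nonneg _
  by_cases hs0 : Real.sqrt (∫ x, v x ^ 2 ∂μ) = 0
  · rw [hs0]; exact mul_nonneg (by norm_num) hBnn
  · set s := Real.sqrt (∫ x, v x ^ 2 ∂μ) with hsdef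
    have hspos : 0 < s := lt_of_le_of_ne (Real.sqrt_nonneg _) (Ne.symm hs0)
    have hssq : s ^ 2 = ∫ x, v x ^ 2 ∂μ := Real.sq_sqrt ht2
    set g : E → ℝ := fun x => v x / s with hgdef
    have hgm : Measurable g := hvm.div_const s
    have hgb : ∀ x, |g x| ≤ 1 / s := by
      intro x
      rw [hgdef]
      calc |v x / s| = |v x| / s := by rw [abs_div, abs_of_pos hspos]
        _ ≤ 1 / s := by gcongr; exact hvb x
    have hgl2 : MemLp g 2 μ := MemLp.of_bound hgm.aestronglyMeasurable (1 / s)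
      (Filter.Eventually.of_forall fun x => by simpa using hgb x)
    have hgi : Integrable g μ := integrable_of_bdd hgm hgb
    have hgsq : ∫ x, g x ^ 2 ∂μ = 1 := by
      have e : ∀ x, g x ^ 2 = v x ^ 2 / s ^ 2 := fun x => by rw [hgdef]; rw [div_pow]
      calc ∫ x, g x ^ 2 ∂μ = ∫ x, v x ^ 2 / s ^ 2 ∂μ := by simp_rw [e]
        _ = (∫ x, v x ^ 2 ∂μ) / s ^ 2 := integral_div _ _
        _ = 1 := by rw [← hssq]; field_simp
    have hsv : s = ∫ x, v x * g x ∂μ := by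
      have e : ∀ x, v x * g x = v x ^ 2 / s := fun x => by rw [hgdef]; ring
      calc s = (∫ x, v x ^ 2 ∂μ) / s := by
            rw [← hssq, pow_two, mul_div_assoc, div_self (ne_of_gt hspos), mul_one]
        _ = ∫ x, v x ^ 2 / s ∂μ := (integral_div _ _).symm
        _ = ∫ x, v x * g x ∂μ := by simp_rw [e]
    have hpair := pairing_eq hinv hadj hum hub hgm hgi n
    have hHi : Integrable (fun x => (kernelAct Pstar)^[n] g x - ∫ z, g z ∂μ) μ :=
      (star_iter_integrable hadj hgm hgi n).sub (integrable_const _)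
    have hbound : ∫ x, u x * ((kernelAct Pstar)^[n] g x - ∫ z, g z ∂μ) ∂μ
        ≤ 1 / 2 * ∫ x, |(kernelAct Pstar)^[n] g x - ∫ z, g z ∂μ| ∂μ := by
      calc ∫ x, u x * ((kernelAct Pstar)^[n] g x - ∫ z, g z ∂μ) ∂μ
          ≤ ∫ x, 1 / 2 * |(kernelAct Pstar)^[n] g x - ∫ z, g z ∂μ| ∂μ := by
            refine integral_mono
              (hHi.bdd_mul (c := 1/2) hum.aestronglyMeasurable (Filter.Eventually.of_forall fun x => by simpa using hub x))
              (hHi.abs.const_mul _) fun x => ?_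
            calc u x * ((kernelAct Pstar)^[n] g x - ∫ z, g z ∂μ)
                ≤ |u x * ((kernelAct Pstar)^[n] g x - ∫ z, g z ∂μ)| := le_abs_self _
              _ = |u x| * |(kernelAct Pstar)^[n] g x - ∫ z, g z ∂μ| := abs_mul _ _
              _ ≤ 1 / 2 * |(kernelAct Pstar)^[n] g x - ∫ z, g z ∂μ| :=
                  mul_le_mul_of_nonneg_right (hub x) (abs_nonneg _)
        _ = 1 / 2 * ∫ x, |(kernelAct Pstar)^[n] g x - ∫ z, g z ∂μ| ∂μ := integral_const_mul _ _
    have hmemB := hBsub g hgm hgl2 (le_of_eq hgsq)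
    calc s = ∫ x, v x * g x ∂μ := hsv
      _ = ∫ x, u x * ((kernelAct Pstar)^[n] g x - ∫ z, g z ∂μ) ∂μ := hpair
      _ ≤ 1 / 2 * ∫ x, |(kernelAct Pstar)^[n] g x - ∫ z, g z ∂μ| ∂μ := hbound
      _ ≤ 1 / 2 * sSup B := by
          refine mul_le_mul_of_nonneg_left (le_csSup hBbdd hmemB) (by norm_num)

lemma ge_core (hinv : ∀ B : Set E, MeasurableSet B → ∫⁻ x, P x B ∂μ = μ B)
    (hadj : μ.compProd Pstar = (μ.compProd P).map Prod.swap)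
    {g : E → ℝ} (hgm : Measurable g) (hg2 : MemLp g 2 μ) (hgsq : (∫ x, g x ^ 2 ∂μ) ≤ 1)
    (n : ℕ) (A : Set ℝ) (hAbdd : BddAbove A)
    (hAsub : ∀ f : E → ℝ, Measurable f → (∃ C, ∀ᵐ x ∂μ, |f x| ≤ C) →
      essSup f μ - essInf f μ ≤ 1 →
      Real.sqrt (∫ x, ((kernelAct P)^[n] f x - ∫ z, f z ∂μ) ^ 2 ∂μ) ∈ A) :
    ∫ x, |(kernelAct Pstar)^[n] g x - ∫ z, g z ∂μ| ∂μ ≤ 2 * sSup A := by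
  classical
  have hgi : Integrable g μ := hg2.integrable (by norm_num)
  set H : E → ℝ := fun x => (kernelAct Pstar)^[n] g x - ∫ z, g z ∂μ with hHdef
  have hHm : Measurable H := (iter_meas hgm n).sub_const _
  have hHi : Integrable H μ := (star_iter_integrable hadj hgm hgi n).sub (integrable_const _)
  set f : E → ℝ := fun x => if 0 ≤ H x then (1/2 : ℝ) else -(1/2) with hfdef
  have hfm : Measurable f :=
    Measurable.ite (measurableSet_le measurable_const hHm) measurable_const measurable_const
  have hfb : ∀ x, |f x| ≤ 1 / 2 := by
    intro x
    simp only [hfdef]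
    by_cases h : 0 ≤ H x
    · rw [if_pos h]; rw [abs_of_nonneg (by norm_num : (0:ℝ) ≤ 1/2)]
    · rw [if_neg h, abs_neg, abs_of_nonneg (by norm_num : (0:ℝ) ≤ 1/2)]
  have hosc : essSup f μ - essInf f μ ≤ 1 := by
    have h1 : essSup f μ ≤ 1 / 2 :=
      real_essSup_le (Filter.Eventually.of_forall fun x => le_trans (le_abs_self _) (hfb x))
        (Filter.Eventually.of_forall fun x => neg_le_of_abs_le (hfb x))
    have h2 : -(1/2) ≤ essInf f μ :=
      real_le_essInf (Filter.Eventually.of_forall fun x => le_trans (le_abs_self _) (hfb x))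
        (Filter.Eventually.of_forall fun x => neg_le_of_abs_le (hfb x))
    linarith
  have hmemA := hAsub f hfm ⟨1/2, Filter.Eventually.of_forall hfb⟩ hosc
  have hfH : ∫ x, f x * H x ∂μ = 1 / 2 * ∫ x, |H x| ∂μ := by
    have e : ∀ x, f x * H x = 1 / 2 * |H x| := by
      intro x
      simp only [hfdef]
      by_cases h : 0 ≤ H x
      · rw [if_pos h, abs_of_nonneg h]
      · rw [if_neg h, abs_of_neg (lt_of_not_ge h)]; ring
    simp_rw [e]
    rw [integral_const_mul]
  have hpair := (pairing_eq hinv hadj hfm hfb hgm hgi n).symm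
  -- Cauchy-Schwarz
  have hwm : Measurable fun x => (kernelAct P)^[n] f x - ∫ z, f z ∂μ :=
    (iter_meas hfm n).sub_const _
  have hwb : ∀ x, |(kernelAct P)^[n] f x - ∫ z, f z ∂μ| ≤ 1 := by
    intro x
    have h1 := iter_bdd (P := P) hfm hfb n x
    have h2 : |∫ z, f z ∂μ| ≤ 1 / 2 := by
      calc |∫ z, f z ∂μ| ≤ ∫ z, |f z| ∂μ := norm_integral_le_integral_norm f
        _ ≤ ∫ _, (1/2 : ℝ) ∂μ :=
          integral_mono (integrable_of_bdd hfm hfb).abs (integrable_const _) hfb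
        _ = 1/2 := by simp
    calc |(kernelAct P)^[n] f x - ∫ z, f z ∂μ|
        = |(kernelAct P)^[n] f x + -∫ z, f z ∂μ| := by rw [sub_eq_add_neg]
      _ ≤ |(kernelAct P)^[n] f x| + |-∫ z, f z ∂μ| := abs_add_le _ _
      _ = |(kernelAct P)^[n] f x| + |∫ z, f z ∂μ| := by rw [abs_neg]
      _ ≤ 1 := by linarith
  have hw2 : MemLp (fun x => (kernelAct P)^[n] f x - ∫ z, f z ∂μ) 2 μ :=
    MemLp.of_bound hwm.aestronglyMeasurable 1
      (Filter.Eventually.of_forall fun x => by simpa using hwb x)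
  have hcs := cauchy_schwarz (μ := μ) hwm hgm hw2 hg2
  have hg1 : Real.sqrt (∫ x, g x ^ 2 ∂μ) ≤ 1 := Real.sqrt_le_one.mpr hgsq
  have hfin : ∫ x, f x * H x ∂μ
      ≤ Real.sqrt (∫ x, ((kernelAct P)^[n] f x - ∫ z, f z ∂μ) ^ 2 ∂μ) := by
    calc ∫ x, f x * H x ∂μ = ∫ x, ((kernelAct P)^[n] f x - ∫ z, f z ∂μ) * g x ∂μ := hpair
      _ ≤ Real.sqrt (∫ x, ((kernelAct P)^[n] f x - ∫ z, f z ∂μ) ^ 2 ∂μ)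
            * Real.sqrt (∫ x, g x ^ 2 ∂μ) := hcs
      _ ≤ Real.sqrt (∫ x, ((kernelAct P)^[n] f x - ∫ z, f z ∂μ) ^ 2 ∂μ) * 1 :=
          mul_le_mul_of_nonneg_left hg1 (Real.sqrt_nonneg _)
      _ = Real.sqrt (∫ x, ((kernelAct P)^[n] f x - ∫ z, f z ∂μ) ^ 2 ∂μ) := mul_one _
  have hle : Real.sqrt (∫ x, ((kernelAct P)^[n] f x - ∫ z, f z ∂μ) ^ 2 ∂μ) ≤ sSup A :=
    le_csSup hAbdd hmemA
  have := hfH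
  linarith [hfin, hle]


end Aux

/-- duality between `‖·‖_osc → L²` convergence of `P` and
`L² → L¹` convergence of the adjoint `P*`:
`sup {‖Pⁿf - μ(f)‖₂ : ‖f‖_osc ≤ 1} = (1/2) sup {‖(P*)ⁿ g - μ(g)‖₁ : ‖g‖₂ ≤ 1}`. -/
theorem osc_L2_convergence_dual_L2_L1
    {E : Type*} [MeasurableSpace E] (μ : Measure E) [IsProbabilityMeasure μ]
    (P Pstar : Kernel E E) [IsMarkovKernel P] [IsMarkovKernel Pstar]
    (hinv : ∀ B : Set E, MeasurableSet B → ∫⁻ x, P x B ∂μ = μ B)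
    (hadj : μ.compProd Pstar = (μ.compProd P).map Prod.swap) (n : ℕ) :
    sSup {y : ℝ | ∃ f : E → ℝ, Measurable f ∧ (∃ C, ∀ᵐ x ∂μ, |f x| ≤ C) ∧
        essSup f μ - essInf f μ ≤ 1 ∧
        y = Real.sqrt (∫ x, ((kernelAct P)^[n] f x - ∫ z, f z ∂μ) ^ 2 ∂μ)}
      = (1 / 2) *
        sSup {y : ℝ | ∃ g : E → ℝ, Measurable g ∧ MemLp g 2 μ ∧
          (∫ x, (g x) ^ 2 ∂μ) ≤ 1 ∧
          y = ∫ x, |(kernelAct Pstar)^[n] g x - ∫ z, g z ∂μ| ∂μ} := by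
  classical
  haveI : NeZero μ := ⟨IsProbabilityMeasure.ne_zero μ⟩
  set A := {y : ℝ | ∃ f : E → ℝ, Measurable f ∧ (∃ C, ∀ᵐ x ∂μ, |f x| ≤ C) ∧
        essSup f μ - essInf f μ ≤ 1 ∧
        y = Real.sqrt (∫ x, ((kernelAct P)^[n] f x - ∫ z, f z ∂μ) ^ 2 ∂μ)} with hAdef
  set B := {y : ℝ | ∃ g : E → ℝ, Measurable g ∧ MemLp g 2 μ ∧
          (∫ x, (g x) ^ 2 ∂μ) ≤ 1 ∧
          y = ∫ x, |(kernelAct Pstar)^[n] g x - ∫ z, g z ∂μ| ∂μ} with hBdef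
  -- zero is in both sets
  have hzP : ∀ x, (kernelAct P)^[n] (fun _ => (0 : ℝ)) x = 0 := by
    intro x
    have h := iter_bdd (P := P) (f := fun _ => (0 : ℝ)) (C := 0)
      measurable_const (by simp) n x
    simpa [abs_nonpos_iff] using h
  have hzPs : ∀ x, (kernelAct Pstar)^[n] (fun _ => (0 : ℝ)) x = 0 := by
    intro x
    have h := iter_bdd (P := Pstar) (f := fun _ => (0 : ℝ)) (C := 0)
      measurable_const (by simp) n x
    simpa [abs_nonpos_iff] using h
  have h0A : (0 : ℝ) ∈ A := by
    refine ⟨fun _ => 0, measurable_const, ⟨0, Filter.Eventually.of_forall (by simp)⟩, ?_, ?_⟩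
    · rw [essSup_const' 0, essInf_const' 0]; norm_num
    · have h1 : (∫ x, ((kernelAct P)^[n] (fun _ => (0:ℝ)) x - ∫ z, (fun _ => (0:ℝ)) z ∂μ) ^ 2 ∂μ)
          = 0 := by
        simp [hzP]
      rw [h1, Real.sqrt_zero]
  have h0B : (0 : ℝ) ∈ B := by
    refine ⟨fun _ => 0, measurable_const, memLp_const 0, by simp, ?_⟩
    simp [hzPs]
  -- upper bounds
  have hBub : ∀ y ∈ B, y ≤ 2 := by
    rintro y ⟨g, hgm, hg2, hgsq, rfl⟩
    have hgi : Integrable g μ := hg2.integrable (by norm_num)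
    have hg1 : ∫ x, |g x| ∂μ ≤ 1 := by
      have hcs := cauchy_schwarz (μ := μ) hgm.abs measurable_const hg2.norm
        (memLp_const (1 : ℝ))
      have e1 : ∫ x, |g x| * (1:ℝ) ∂μ = ∫ x, |g x| ∂μ := by simp
      have e2 : ∫ x, |g x| ^ 2 ∂μ = ∫ x, g x ^ 2 ∂μ := by simp [sq_abs]
      have e3 : ∫ _x, (1:ℝ) ^ 2 ∂μ = 1 := by simp
      rw [e1, e2, e3] at hcs
      calc ∫ x, |g x| ∂μ ≤ Real.sqrt (∫ x, g x ^ 2 ∂μ) * Real.sqrt 1 := hcs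
        _ = Real.sqrt (∫ x, g x ^ 2 ∂μ) := by rw [Real.sqrt_one, mul_one]
        _ ≤ 1 := Real.sqrt_le_one.mpr hgsq
    have hsi : Integrable ((kernelAct Pstar)^[n] g) μ := star_iter_integrable hadj hgm hgi n
    calc ∫ x, |(kernelAct Pstar)^[n] g x - ∫ z, g z ∂μ| ∂μ
        ≤ ∫ x, (|(kernelAct Pstar)^[n] g x| + |∫ z, g z ∂μ|) ∂μ := by
          refine integral_mono (hsi.sub (integrable_const _)).abs
            (hsi.abs.add (integrable_const _)) fun x => ?_
          rw [sub_eq_add_neg]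
          exact le_trans (abs_add_le _ _) (by rw [abs_neg])
      _ = ∫ x, |(kernelAct Pstar)^[n] g x| ∂μ + |∫ z, g z ∂μ| := by
          rw [integral_add hsi.abs (integrable_const _)]; simp
      _ ≤ ∫ x, |g x| ∂μ + ∫ x, |g x| ∂μ := by
          have h1 := star_iter_l1_le hadj hgm hgi n
          have h2 : |∫ z, g z ∂μ| ≤ ∫ x, |g x| ∂μ := norm_integral_le_integral_norm g
          linarith
      _ ≤ 2 := by linarith
  have hBbdd : BddAbove B := ⟨2, fun y hy => hBub y hy⟩
  have hBnn : (0 : ℝ) ≤ sSup B := le_csSup hBbdd h0B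
  have hAub : ∀ y ∈ A, y ≤ 1 := by
    rintro y ⟨f, hfm, ⟨C, hC⟩, hosc, rfl⟩
    obtain ⟨u, hum, hub, hcong⟩ := reduce_osc hinv hfm hC hosc
    have hvb : ∀ x, |(kernelAct P)^[n] u x - ∫ z, u z ∂μ| ≤ 1 := by
      intro x
      have h1 := iter_bdd (P := P) hum hub n x
      have h2 : |∫ z, u z ∂μ| ≤ 1 / 2 := by
        calc |∫ z, u z ∂μ| ≤ ∫ z, |u z| ∂μ := norm_integral_le_integral_norm u
          _ ≤ ∫ _, (1/2 : ℝ) ∂μ :=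
            integral_mono (integrable_of_bdd hum hub).abs (integrable_const _) hub
          _ = 1/2 := by simp
      rw [sub_eq_add_neg]
      calc |(kernelAct P)^[n] u x + -∫ z, u z ∂μ|
          ≤ |(kernelAct P)^[n] u x| + |-∫ z, u z ∂μ| := abs_add_le _ _
        _ = |(kernelAct P)^[n] u x| + |∫ z, u z ∂μ| := by rw [abs_neg]
        _ ≤ 1 := by linarith
    have hyv : Real.sqrt (∫ x, ((kernelAct P)^[n] f x - ∫ z, f z ∂μ) ^ 2 ∂μ)
        = Real.sqrt (∫ x, ((kernelAct P)^[n] u x - ∫ z, u z ∂μ) ^ 2 ∂μ) := by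
      congr 1
      refine integral_congr_ae ?_
      filter_upwards [hcong n] with x hx
      rw [hx]
    rw [hyv]
    have hsq : ∫ x, ((kernelAct P)^[n] u x - ∫ z, u z ∂μ) ^ 2 ∂μ ≤ 1 := by
      have hvm : Measurable fun x => (kernelAct P)^[n] u x - ∫ z, u z ∂μ :=
        (iter_meas hum n).sub_const _
      calc ∫ x, ((kernelAct P)^[n] u x - ∫ z, u z ∂μ) ^ 2 ∂μ ≤ ∫ _, (1:ℝ) ∂μ := by
            refine integral_mono ?_ (integrable_const _) fun x => ?_
            · refine (integrable_of_bdd (hvm.pow_const 2) (C := 1) fun x => ?_)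
              rw [abs_pow]
              nlinarith [hvb x, abs_nonneg ((kernelAct P)^[n] u x - ∫ z, u z ∂μ)]
            · have h := hvb x
              nlinarith [sq_abs ((kernelAct P)^[n] u x - ∫ z, u z ∂μ),
                abs_nonneg ((kernelAct P)^[n] u x - ∫ z, u z ∂μ)]
        _ = 1 := by simp
    calc Real.sqrt (∫ x, ((kernelAct P)^[n] u x - ∫ z, u z ∂μ) ^ 2 ∂μ) ≤ Real.sqrt 1 :=
          Real.sqrt_le_sqrt hsq
      _ = 1 := Real.sqrt_one
  have hAbdd : BddAbove A := ⟨1, fun y hy => hAub y hy⟩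
  have hAnn : (0 : ℝ) ≤ sSup A := le_csSup hAbdd h0A
  refine le_antisymm ?_ ?_
  · refine csSup_le ⟨0, h0A⟩ ?_
    rintro y ⟨f, hfm, ⟨C, hC⟩, hosc, rfl⟩
    obtain ⟨u, hum, hub, hcong⟩ := reduce_osc hinv hfm hC hosc
    have hyv : Real.sqrt (∫ x, ((kernelAct P)^[n] f x - ∫ z, f z ∂μ) ^ 2 ∂μ)
        = Real.sqrt (∫ x, ((kernelAct P)^[n] u x - ∫ z, u z ∂μ) ^ 2 ∂μ) := by
      congr 1
      refine integral_congr_ae ?_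
      filter_upwards [hcong n] with x hx
      rw [hx]
    rw [hyv]
    refine le_core hinv hadj hum hub n B hBbdd hBnn ?_
    intro g hgm hg2 hgsq
    exact ⟨g, hgm, hg2, hgsq, rfl⟩
  · have key : ∀ b ∈ B, b ≤ 2 * sSup A := by
      rintro b ⟨g, hgm, hg2, hgsq, rfl⟩
      refine ge_core hinv hadj hgm hg2 hgsq n A hAbdd ?_
      intro f hfm hbd hosc
      exact ⟨f, hfm, hbd, hosc, rfl⟩
    have h := csSup_le ⟨0, h0B⟩ key
    have hAnn2 := hAnn
    linarith
end

section
/- Let P be a μ-invariant Markov kernel, and suppose P(x,{x}) ≥ ε for μ-almost all x, for some ε > 0. Then for all f ∈ L²₀(μ), 𝓔(P*P, f) ≥ 2ε·𝓔(P, f). -/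
open MeasureTheory ProbabilityTheory
open scoped ENNReal

/-- Let `P` be a `μ`-invariant Markov kernel with adjoint `P*` and with
holding probabilities `P(x, {x}) ≥ ε` for `μ`-almost every `x`. Then for every
mean-zero `f ∈ L²(μ)`, the Dirichlet forms satisfy `𝓔(P*P, f) ≥ 2ε·𝓔(P, f)`. -/
theorem dirichlet_adjoint_comp_ge_of_holding
    {E : Type*} [MeasurableSpace E] [MeasurableSingletonClass E]
    (μ : Measure E) [IsProbabilityMeasure μ]
    (P Pstar : Kernel E E) [IsMarkovKernel P] [IsMarkovKernel Pstar]
    (hinv : ∀ B : Set E, MeasurableSet B → ∫⁻ x, P x B ∂μ = μ B)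
    (hadj : μ.compProd Pstar = (μ.compProd P).map Prod.swap)
    (ε : ℝ) (hε : 0 < ε)
    (hhold : ∀ᵐ x ∂μ, ENNReal.ofReal ε ≤ P x {x})
    (f : E → ℝ) (hf : Measurable f) (hf2 : MemLp f 2 μ)
    (hf0 : (∫ x, f x ∂μ) = 0) :
    ENNReal.ofReal (2 * ε) *
        (((1 : ℝ≥0∞) / 2) * ∫⁻ x, ∫⁻ y, ENNReal.ofReal ((f y - f x) ^ 2) ∂(P x) ∂μ)
      ≤ ((1 : ℝ≥0∞) / 2) *
          ∫⁻ x, ∫⁻ y, ENNReal.ofReal ((f y - f x) ^ 2) ∂((P ∘ₖ Pstar) x) ∂μ := by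
  set g : E → E → ℝ≥0∞ := fun x y => ENNReal.ofReal ((f y - f x) ^ 2) with hg_def
  have hg : Measurable (Function.uncurry g) := by
    apply ENNReal.measurable_ofReal.comp
    exact ((hf.comp measurable_snd).sub (hf.comp measurable_fst)).pow_const 2
  have hgx : ∀ x, Measurable (g x) := fun x => hg.comp (measurable_prodMk_left)
  have hgsym : ∀ x y, g x y = g y x := by
    intro x y; simp only [hg_def]; congr 1; ring
  have hgzero : ∀ x, g x x = 0 := by
    intro x; simp [hg_def]
  -- the function (x, z) ↦ ∫⁻ y, g x y ∂ P z and its measurability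
  set F : E × E → ℝ≥0∞ := fun p => ∫⁻ y, g p.1 y ∂(P p.2) with hF_def
  have hF : Measurable F := by
    have : Measurable fun p : E × E => ∫⁻ y, g p.1 y ∂((Kernel.prodMkLeft E P) p) :=
      Measurable.lintegral_kernel_prod_right'
        (f := fun q : (E × E) × E => g q.1.1 q.2)
        (hg.comp ((measurable_fst.comp measurable_fst).prodMk measurable_snd))
    simpa [Kernel.prodMkLeft_apply] using this
  -- rewrite the RHS integral using comp then the adjoint relation
  have hcomp : ∀ x, ∫⁻ y, g x y ∂((P ∘ₖ Pstar) x) = ∫⁻ z, F (x, z) ∂(Pstar x) := by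
    intro x
    exact Kernel.lintegral_comp P Pstar x (hgx x)
  have hI : ∫⁻ x, ∫⁻ y, g x y ∂((P ∘ₖ Pstar) x) ∂μ
      = ∫⁻ z, ∫⁻ x, F (x, z) ∂(P z) ∂μ := by
    calc ∫⁻ x, ∫⁻ y, g x y ∂((P ∘ₖ Pstar) x) ∂μ
        = ∫⁻ x, ∫⁻ z, F (x, z) ∂(Pstar x) ∂μ := by
          exact lintegral_congr hcomp
      _ = ∫⁻ p, F p ∂(μ.compProd Pstar) := (Measure.lintegral_compProd hF).symm
      _ = ∫⁻ p, F p ∂((μ.compProd P).map Prod.swap) := by rw [hadj]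
      _ = ∫⁻ p, F p.swap ∂(μ.compProd P) := by
          rw [lintegral_map hF measurable_swap]
      _ = ∫⁻ z, ∫⁻ x, F (x, z) ∂(P z) ∂μ := by
          exact Measure.lintegral_compProd (hF.comp measurable_swap)
  -- pointwise estimate for a.e. z
  have hpt : ∀ z, ENNReal.ofReal ε ≤ P z {z} →
      ENNReal.ofReal (2 * ε) * ∫⁻ y, g z y ∂(P z) ≤ ∫⁻ x, F (x, z) ∂(P z) := by
    intro z hz
    set ν := P z with hν
    set Dz := ∫⁻ y, g z y ∂ν with hDz
    have hmeas_h : Measurable fun x => F (x, z) := hF.comp (measurable_prodMk_right)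
    have hsplit : ∫⁻ x, F (x, z) ∂ν
        = ∫⁻ x in {z}, F (x, z) ∂ν + ∫⁻ x in {z}ᶜ, F (x, z) ∂ν :=
      (lintegral_add_compl _ (measurableSet_singleton z)).symm
    have h1 : ENNReal.ofReal ε * Dz ≤ ∫⁻ x in {z}, F (x, z) ∂ν := by
      rw [lintegral_singleton]
      have : F (z, z) = Dz := rfl
      rw [this, mul_comm]
      exact mul_le_mul_right hz _
    have h2 : ENNReal.ofReal ε * Dz ≤ ∫⁻ x in {z}ᶜ, F (x, z) ∂ν := by
      have hstep : ∀ x, g x z * ν {z} ≤ F (x, z) := by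
        intro x
        have : ∫⁻ y in {z}, g x y ∂ν ≤ ∫⁻ y, g x y ∂ν :=
          setLIntegral_le_lintegral _ _
        rwa [lintegral_singleton] at this
      calc ENNReal.ofReal ε * Dz ≤ ν {z} * Dz := mul_le_mul_left hz _
        _ = ν {z} * ∫⁻ x, g x z ∂ν := by
            congr 1
            exact lintegral_congr fun y => hgsym z y
        _ = ν {z} * ∫⁻ x in {z}ᶜ, g x z ∂ν := by
            congr 1
            rw [← lintegral_add_compl (fun x => g x z) (measurableSet_singleton z),
              lintegral_singleton, hgzero, zero_mul, zero_add]
        _ = (∫⁻ x in {z}ᶜ, g x z ∂ν) * ν {z} := mul_comm _ _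
        _ = ∫⁻ x in {z}ᶜ, g x z * ν {z} ∂ν :=
            (lintegral_mul_const _ (hg.comp (measurable_id.prodMk measurable_const))).symm
        _ ≤ ∫⁻ x in {z}ᶜ, F (x, z) ∂ν := lintegral_mono fun x => hstep x
    calc ENNReal.ofReal (2 * ε) * Dz
        = ENNReal.ofReal ε * Dz + ENNReal.ofReal ε * Dz := by
          rw [show ENNReal.ofReal (2 * ε) = ENNReal.ofReal ε + ENNReal.ofReal ε by
              rw [two_mul, ENNReal.ofReal_add hε.le hε.le], add_mul]
      _ ≤ ∫⁻ x in {z}, F (x, z) ∂ν + ∫⁻ x in {z}ᶜ, F (x, z) ∂ν := add_le_add h1 h2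
      _ = ∫⁻ x, F (x, z) ∂ν := hsplit.symm
  -- combine
  have hDmeas : Measurable fun z => ∫⁻ y, g z y ∂(P z) :=
    Measurable.lintegral_kernel_prod_right hg
  have main : ENNReal.ofReal (2 * ε) * (∫⁻ x, ∫⁻ y, g x y ∂(P x) ∂μ)
      ≤ ∫⁻ x, ∫⁻ y, g x y ∂((P ∘ₖ Pstar) x) ∂μ := by
    rw [hI, ← lintegral_const_mul _ hDmeas]
    refine lintegral_mono_ae ?_
    filter_upwards [hhold] with z hz
    exact hpt z hz
  calc ENNReal.ofReal (2 * ε) * (((1 : ℝ≥0∞) / 2) * ∫⁻ x, ∫⁻ y, g x y ∂(P x) ∂μ)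
      = ((1 : ℝ≥0∞) / 2) * (ENNReal.ofReal (2 * ε) * ∫⁻ x, ∫⁻ y, g x y ∂(P x) ∂μ) := by
        ring
    _ ≤ ((1 : ℝ≥0∞) / 2) * ∫⁻ x, ∫⁻ y, g x y ∂((P ∘ₖ Pstar) x) ∂μ :=
        mul_le_mul_right main _
end

section
/- Let P be a μ-invariant Markov kernel satisfying an L¹-WPI with function α₁ : (0,1/2) → (0,∞): var⁽¹⁾_μ(f) ≤ α₁(r)·𝓔₁(P,f) + r·‖f‖_osc for all r ∈ (0,1/2) and f ∈ L¹(μ). Then P satisfies an L²-WPI with α(r) := inf_{θ∈(0,1)} α₁((1−θ)r)²/(2θ(1−θ)) ≤ 2·α₁(r/2)²: namely ‖f‖₂² ≤ α(r)·𝓔(P,f) + r·‖f‖²_osc for all r > 0, f ∈ L²₀(μ). -/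
set_option linter.unusedSectionVars false
set_option maxHeartbeats 1000000
open MeasureTheory ProbabilityTheory Filter
open scoped ENNReal

section helpers
variable {E : Type*} [MeasurableSpace E] {μ : Measure E} [IsProbabilityMeasure μ]

lemma aux_bddBelow_ub (u : E → ℝ) : BddBelow {a : ℝ | ∀ᵐ x ∂μ, u x ≤ a} := by
  by_contra h
  have hall : ∀ n : ℕ, ∀ᵐ x ∂μ, u x ≤ -(n : ℝ) := by
    intro n
    obtain ⟨a, ha, hlt⟩ := not_bddBelow_iff.1 h (-(n : ℝ))
    have ha' : ∀ᵐ x ∂μ, u x ≤ a := ha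
    exact ha'.mono fun x hx => hx.trans hlt.le
  have : ∀ᵐ x ∂μ, ∀ n : ℕ, u x ≤ -(n : ℝ) := (ae_all_iff).2 hall
  obtain ⟨x, hx⟩ := this.exists
  obtain ⟨n, hn⟩ := exists_nat_gt (-u x)
  have := hx n
  linarith

lemma aux_bddAbove_lb (u : E → ℝ) : BddAbove {a : ℝ | ∀ᵐ x ∂μ, a ≤ u x} := by
  by_contra h
  have hall : ∀ n : ℕ, ∀ᵐ x ∂μ, (n : ℝ) ≤ u x := by
    intro n
    obtain ⟨a, ha, hlt⟩ := not_bddAbove_iff.1 h (n : ℝ)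
    have ha' : ∀ᵐ x ∂μ, a ≤ u x := ha
    exact ha'.mono fun x hx => hlt.le.trans hx
  have : ∀ᵐ x ∂μ, ∀ n : ℕ, (n : ℝ) ≤ u x := (ae_all_iff).2 hall
  obtain ⟨x, hx⟩ := this.exists
  obtain ⟨n, hn⟩ := exists_nat_gt (u x)
  have := hx n
  linarith

lemma aux_essSup_le (u : E → ℝ) {B : ℝ} (h : ∀ᵐ x ∂μ, u x ≤ B) : essSup u μ ≤ B := by
  rw [essSup, limsup_eq]
  exact csInf_le (aux_bddBelow_ub u) h

lemma aux_le_essInf (u : E → ℝ) {B : ℝ} (h : ∀ᵐ x ∂μ, B ≤ u x) : B ≤ essInf u μ := by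
  rw [essInf, liminf_eq]
  exact le_csSup (aux_bddAbove_lb u) h

lemma aux_essInf_nonneg (u : E → ℝ) (h : ∀ᵐ x ∂μ, 0 ≤ u x) : 0 ≤ essInf u μ :=
  aux_le_essInf u h

lemma aux_essInf_unbounded (u : E → ℝ) (h : ∀ a : ℝ, ¬ ∀ᵐ x ∂μ, a ≤ u x) :
    essInf u μ = 0 := by
  rw [essInf, liminf_eq]
  have : {a : ℝ | ∀ᵐ x ∂μ, a ≤ u x} = ∅ := by
    ext a; simp only [Set.mem_setOf_eq, Set.mem_empty_iff_false, iff_false]; exact h a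
  rw [this, Real.sSup_empty]

lemma aux_ae_le_essSup (u : E → ℝ) (hB : ∃ B, ∀ᵐ x ∂μ, u x ≤ B) :
    ∀ᵐ x ∂μ, u x ≤ essSup u μ := by
  set A := {a : ℝ | ∀ᵐ x ∂μ, u x ≤ a} with hA
  have hAne : A.Nonempty := hB
  have hAbdd : BddBelow A := aux_bddBelow_ub u
  have hmem : ∀ n : ℕ, sInf A + 1 / (n + 1) ∈ A := by
    intro n
    have hpos : (0 : ℝ) < 1 / (n + 1) := by positivity
    obtain ⟨a, haA, hlt⟩ := (csInf_lt_iff hAbdd hAne).1 (by linarith : sInf A < sInf A + 1 / (n + 1))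
    have ha' : ∀ᵐ x ∂μ, u x ≤ a := haA
    exact ha'.mono fun x hx => hx.trans hlt.le
  have hae : ∀ᵐ x ∂μ, ∀ n : ℕ, u x ≤ sInf A + 1 / (n + 1) := (ae_all_iff).2 hmem
  have : essSup u μ = sInf A := by rw [essSup, limsup_eq]
  rw [this]
  refine hae.mono fun x hx => ?_
  refine le_of_forall_pos_le_add fun ε hε => ?_
  obtain ⟨n, hn⟩ := exists_nat_one_div_lt hε
  have := hx n
  push_cast at this hn ⊢
  linarith

lemma aux_ae_essInf_le (u : E → ℝ) (hB : ∃ B, ∀ᵐ x ∂μ, B ≤ u x) :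
    ∀ᵐ x ∂μ, essInf u μ ≤ u x := by
  set A := {a : ℝ | ∀ᵐ x ∂μ, a ≤ u x} with hA
  have hAne : A.Nonempty := hB
  have hAbdd : BddAbove A := aux_bddAbove_lb u
  have hmem : ∀ n : ℕ, sSup A - 1 / (n + 1) ∈ A := by
    intro n
    have hpos : (0 : ℝ) < 1 / (n + 1) := by positivity
    obtain ⟨a, haA, hlt⟩ := (lt_csSup_iff hAbdd hAne).1 (by linarith : sSup A - 1 / (n + 1) < sSup A)
    have ha' : ∀ᵐ x ∂μ, a ≤ u x := haA
    exact ha'.mono fun x hx => hlt.le.trans hx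
  have hae : ∀ᵐ x ∂μ, ∀ n : ℕ, sSup A - 1 / (n + 1) ≤ u x := (ae_all_iff).2 hmem
  have : essInf u μ = sSup A := by rw [essInf, liminf_eq]
  rw [this]
  refine hae.mono fun x hx => ?_
  have : ∀ ε > (0:ℝ), sSup A ≤ u x + ε := by
    intro ε hε
    obtain ⟨n, hn⟩ := exists_nat_one_div_lt hε
    have := hx n
    push_cast at this hn ⊢
    linarith
  exact le_of_forall_pos_le_add this

end helpers

section helpers2
variable {E : Type*} [MeasurableSpace E] {μ : Measure E} [IsProbabilityMeasure μ]

lemma aux_sq_split (a b : ℝ) :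
    (max a 0 - max b 0) ^ 2 + (max (-a) 0 - max (-b) 0) ^ 2 ≤ (a - b) ^ 2 := by
  rcases le_total a 0 with h1 | h1 <;> rcases le_total b 0 with h2 | h2 <;>
    simp [max_eq_left, max_eq_right, h1, h2, neg_nonneg.2, Left.nonneg_neg_iff] <;> nlinarith

lemma aux_young (t x y : ℝ) (ht : 0 < t) : x * y ≤ x ^ 2 / (4 * t) + t * y ^ 2 := by
  rw [div_add' _ _ _ (by positivity), le_div_iff₀ (by positivity)]
  nlinarith [sq_nonneg (x - 2 * t * y)]

lemma aux_abs_sq_sub (a b : ℝ) (ha : 0 ≤ a) (hb : 0 ≤ b) :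
    |a ^ 2 - b ^ 2| = |a - b| * (a + b) := by
  have h : a ^ 2 - b ^ 2 = (a - b) * (a + b) := by ring
  rw [h, abs_mul, abs_of_nonneg (show (0:ℝ) ≤ a + b by linarith)]

lemma aux_median (f : E → ℝ) (hf : Measurable f) {lb ub : ℝ}
    (hub : ∀ᵐ x ∂μ, f x ≤ ub) (hlb : ∀ᵐ x ∂μ, lb ≤ f x) :
    ∃ m : ℝ, lb ≤ m ∧ m ≤ ub ∧ (1/2 : ℝ≥0∞) ≤ μ {x | f x ≤ m} ∧
      (1/2 : ℝ≥0∞) ≤ μ {x | m ≤ f x} := by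
  classical
  set T : Set ℝ := {t : ℝ | (1/2 : ℝ≥0∞) ≤ μ {x | f x ≤ t}} with hT
  have hmemub : ub ∈ T := by
    have h1 : μ {x | f x ≤ ub} = 1 := by
      have h0 : μ {x | ¬ f x ≤ ub} = 0 := ae_iff.1 hub
      have h2 := measure_add_measure_compl (μ := μ) (s := {x | f x ≤ ub})
        (measurableSet_le hf measurable_const)
      rw [show {x | f x ≤ ub}ᶜ = {x | ¬ f x ≤ ub} from rfl, h0, add_zero] at h2
      simpa using h2
    rw [hT, Set.mem_setOf_eq, h1]
    exact ENNReal.half_le_self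
  have hlbT : ∀ t ∈ T, lb ≤ t := by
    intro t ht
    have hfreq : ∃ᶠ x in ae μ, f x ≤ t := by
      rw [frequently_ae_iff]
      intro h0
      rw [hT, Set.mem_setOf_eq, h0] at ht
      simp at ht
    obtain ⟨x, hx1, hx2⟩ := (hfreq.and_eventually hlb).exists
    linarith
  have hTne : T.Nonempty := ⟨ub, hmemub⟩
  have hTbdd : BddBelow T := ⟨lb, fun t ht => hlbT t ht⟩
  set m := sInf T with hm
  have hub' : m ≤ ub := csInf_le hTbdd hmemub
  have hlb' : lb ≤ m := le_csInf hTne hlbT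
  have hmemT : ∀ n : ℕ, m + 1 / (n + 1) ∈ T := by
    intro n
    have hpos : (0 : ℝ) < 1 / (n + 1) := by positivity
    obtain ⟨t, htT, hlt⟩ := (csInf_lt_iff hTbdd hTne).1 (by linarith : m < m + 1 / (n + 1))
    have ht' : (1/2 : ℝ≥0∞) ≤ μ {x | f x ≤ t} := htT
    exact ht'.trans (measure_mono fun x hx => le_trans hx hlt.le)
  have half1 : (1/2 : ℝ≥0∞) ≤ μ {x | f x ≤ m} := by
    have hseteq : {x | f x ≤ m} = ⋂ n : ℕ, {x | f x ≤ m + 1 / (n + 1)} := by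
      ext x
      simp only [Set.mem_setOf_eq, Set.mem_iInter]
      constructor
      · intro h n
        have hp : (0:ℝ) < 1 / (n+1) := by positivity
        linarith
      · intro h
        refine le_of_forall_pos_le_add fun ε hε => ?_
        obtain ⟨n, hn⟩ := exists_nat_one_div_lt hε
        have := h n; push_cast at this hn ⊢; linarith
    have hanti : Antitone fun n : ℕ => {x | f x ≤ m + 1 / (n + 1)} := by
      intro i j hij x hx
      simp only [Set.mem_setOf_eq] at hx ⊢
      have hle : (1:ℝ)/(j+1) ≤ 1/(i+1) := by
        apply one_div_le_one_div_of_le (by positivity)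
        have := (Nat.cast_le (α := ℝ)).2 hij
        linarith
      linarith
    rw [hseteq, hanti.measure_iInter
      (fun n => (measurableSet_le hf measurable_const).nullMeasurableSet)
      ⟨0, measure_ne_top μ _⟩]
    exact le_iInf fun n => hmemT n
  have half2 : (1/2 : ℝ≥0∞) ≤ μ {x | m ≤ f x} := by
    have hlt : μ {x | f x < m} ≤ 1/2 := by
      have hseteq : {x | f x < m} = ⋃ n : ℕ, {x | f x ≤ m - 1 / (n + 1)} := by
        ext x
        simp only [Set.mem_setOf_eq, Set.mem_iUnion]
        constructor
        · intro h
          obtain ⟨n, hn⟩ := exists_nat_one_div_lt (by linarith : (0:ℝ) < m - f x)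
          exact ⟨n, by push_cast at hn ⊢; linarith⟩
        · rintro ⟨n, hn⟩
          have hp : (0:ℝ) < 1/(n+1) := by positivity
          linarith
      have hmono : Monotone fun n : ℕ => {x | f x ≤ m - 1 / (n + 1)} := by
        intro i j hij x hx
        simp only [Set.mem_setOf_eq] at hx ⊢
        have hle : (1:ℝ)/(j+1) ≤ 1/(i+1) := by
          apply one_div_le_one_div_of_le (by positivity)
          have := (Nat.cast_le (α := ℝ)).2 hij
          linarith
        linarith
      rw [hseteq, hmono.measure_iUnion]
      refine iSup_le fun n => ?_
      have hnot : m - 1 / (n + 1) ∉ T := by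
        intro hmem
        have := csInf_le hTbdd hmem
        have hpos : (0:ℝ) < 1 / (n+1) := by positivity
        rw [← hm] at this
        linarith
      rw [hT, Set.mem_setOf_eq, not_le] at hnot
      exact hnot.le
    have hcompl := measure_add_measure_compl (μ := μ) (s := {x | f x < m})
      (measurableSet_lt hf measurable_const)
    have hce : {x | f x < m}ᶜ = {x | m ≤ f x} := by ext x; simp
    rw [hce, measure_univ] at hcompl
    have h1 : (1:ℝ≥0∞) ≤ 1/2 + μ {x | m ≤ f x} :=
      hcompl ▸ (add_le_add hlt le_rfl : μ {x | f x < m} + μ {x | m ≤ f x} ≤ _)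
    have h2 : (1/2 : ℝ≥0∞) + 1/2 ≤ 1/2 + μ {x | m ≤ f x} := by
      rw [ENNReal.add_halves]; exact h1
    exact (ENNReal.add_le_add_iff_left (by norm_num)).1 h2
  exact ⟨m, hlb', hub', half1, half2⟩

end helpers2


lemma aux_unbounded_false {E : Type*} [MeasurableSpace E] (μ : Measure E) [IsProbabilityMeasure μ]
    (P : Kernel E E) (A : ℝ) (hA : 0 < A)
    (hL1 : ∀ f : E → ℝ, Measurable f → Integrable f μ →
      (⨅ c : ℝ, ∫ x, |f x - c| ∂μ)
        ≤ A * ((1 / 2) * ∫ x, ∫ y, |f y - f x| ∂(P x) ∂μ)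
          + (1/4) * (essSup f μ - essInf f μ))
    (h : E → ℝ) (hmeas : Measurable h) (hint : Integrable h μ) (hle : ∀ x, h x ≤ 0)
    (hub : ∀ a : ℝ, ¬ ∀ᵐ x ∂μ, a ≤ h x) : False := by
  set D : ℝ := (1 / 2) * ∫ x, ∫ y, |h y - h x| ∂(P x) ∂μ with hD
  have hDnn : 0 ≤ D := by
    apply mul_nonneg (by norm_num)
    exact integral_nonneg fun x => integral_nonneg fun y => abs_nonneg _
  set K : ℝ := 4 * (A * D + 1) with hK
  have hKpos : 0 < K := by positivity
  set g : E → ℝ := fun x => h x - K with hg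
  have hgmeas : Measurable g := hmeas.sub measurable_const
  have hgint : Integrable g μ := hint.sub (integrable_const K)
  have h1 := hL1 g hgmeas hgint
  have hEeq : (1 / 2) * ∫ x, ∫ y, |g y - g x| ∂(P x) ∂μ = D := by
    rw [hD]
    congr 1
    apply integral_congr_ae
    filter_upwards with x
    apply integral_congr_ae
    filter_upwards with y
    simp [hg]
  have hsup : essSup g μ ≤ -K :=
    aux_essSup_le g (Filter.Eventually.of_forall fun x => by
      simp only [hg]; linarith [hle x])
  have hinf : essInf g μ = 0 := by
    apply aux_essInf_unbounded
    intro a ha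
    exact hub (a + K) (ha.mono fun x hx => by simp only [hg] at hx; linarith)
  have hlhs : 0 ≤ ⨅ c : ℝ, ∫ x, |g x - c| ∂μ :=
    Real.iInf_nonneg fun c => integral_nonneg fun x => abs_nonneg _
  rw [hEeq, hinf] at h1
  have : (0:ℝ) ≤ A * D + 1/4 * (-K - 0) := le_trans hlhs (h1.trans (by
    have : essSup g μ - 0 ≤ -K - 0 := by linarith
    nlinarith))
  rw [hK] at this
  linarith


lemma aux_key {E : Type*} [MeasurableSpace E] (μ : Measure E) [IsProbabilityMeasure μ]
    (P : Kernel E E) [IsMarkovKernel P]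
    (hsnd : (μ ⊗ₘ P).map Prod.snd = μ) (hfst : (μ ⊗ₘ P).map Prod.fst = μ)
    (r' θ a : ℝ) (hr' : 0 < r') (hθ : 0 < θ) (hθ1 : θ < 1) (ha : 0 < a)
    (hWPI : ∀ g : E → ℝ, Measurable g → Integrable g μ →
      (⨅ c : ℝ, ∫ x, |g x - c| ∂μ)
        ≤ a * ((1 / 2) * ∫ x, ∫ y, |g y - g x| ∂(P x) ∂μ)
          + r' * (essSup g μ - essInf g μ))
    (g : E → ℝ) (hg : Measurable g) (hg0 : ∀ x, 0 ≤ g x) (C : ℝ) (hC : 0 ≤ C)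
    (hgC : ∀ᵐ x ∂μ, g x ≤ C) (hghalf : (1/2 : ℝ≥0∞) ≤ μ {x | g x = 0}) :
    (1 - θ) * ∫ x, g x ^ 2 ∂μ
      ≤ a ^ 2 / (4 * θ) * (∫ z, (g z.2 - g z.1) ^ 2 ∂(μ ⊗ₘ P)) + r' * C ^ 2 := by
  have hae_snd : ∀ {p : E → Prop}, (∀ᵐ x ∂μ, p x) → ∀ᵐ z ∂(μ ⊗ₘ P), p z.2 := by
    intro p hp
    rw [← hsnd] at hp
    exact ae_of_ae_map measurable_snd.aemeasurable hp
  have hae_fst : ∀ {p : E → Prop}, (∀ᵐ x ∂μ, p x) → ∀ᵐ z ∂(μ ⊗ₘ P), p z.1 := by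
    intro p hp
    rw [← hfst] at hp
    exact ae_of_ae_map measurable_fst.aemeasurable hp
  have hint_snd : ∀ (w : E → ℝ), Measurable w → ∫ z, w z.2 ∂(μ ⊗ₘ P) = ∫ x, w x ∂μ := by
    intro w hw
    have h := integral_map (φ := Prod.snd) (μ := μ ⊗ₘ P)
      measurable_snd.aemeasurable (f := w) hw.aestronglyMeasurable
    rw [hsnd] at h
    exact h.symm
  have hint_fst : ∀ (w : E → ℝ), Measurable w → ∫ z, w z.1 ∂(μ ⊗ₘ P) = ∫ x, w x ∂μ := by
    intro w hw
    have h := integral_map (φ := Prod.fst) (μ := μ ⊗ₘ P)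
      measurable_fst.aemeasurable (f := w) hw.aestronglyMeasurable
    rw [hfst] at h
    exact h.symm
  have hbint : ∀ (w : E × E → ℝ) (C' : ℝ), Measurable w → (∀ᵐ z ∂(μ ⊗ₘ P), |w z| ≤ C') →
      Integrable w (μ ⊗ₘ P) := fun w C' hw hb =>
    Integrable.mono' (integrable_const C') hw.aestronglyMeasurable (by simpa using hb)
  have hGmeas : Measurable fun x => g x ^ 2 := hg.pow_const 2
  have hGb : ∀ᵐ x ∂μ, g x ^ 2 ≤ C ^ 2 := hgC.mono fun x hx => by nlinarith [hg0 x]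
  have hGint : Integrable (fun x => g x ^ 2) μ :=
    (integrable_const (C ^ 2)).mono' hGmeas.aestronglyMeasurable (hGb.mono fun x hx => by
      rw [Real.norm_eq_abs, abs_of_nonneg (sq_nonneg _)]; exact hx)
  have hG2nn : 0 ≤ ∫ x, g x ^ 2 ∂μ := integral_nonneg fun x => sq_nonneg _
  -- Step B : the L¹ variance of g² dominates ‖g‖₂²
  have hstepB : ∫ x, g x ^ 2 ∂μ ≤ ⨅ c : ℝ, ∫ x, |g x ^ 2 - c| ∂μ := by
    refine le_ciInf fun c => ?_
    set A : Set E := {x | g x = 0} with hA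
    have hAm : MeasurableSet A := hg (measurableSet_singleton 0)
    have habsint : Integrable (fun x => |g x ^ 2 - c|) μ := (hGint.sub (integrable_const c)).abs
    set p : ℝ := (μ A).toReal with hp
    have hp2 : 1 / 2 ≤ p := by
      have := ENNReal.toReal_mono (measure_ne_top μ A) hghalf
      simpa using this
    have hp1 : p ≤ 1 := by
      have := ENNReal.toReal_mono (measure_ne_top μ Set.univ) (measure_mono (Set.subset_univ A))
      simpa using this
    have hpc : (μ Aᶜ).toReal = 1 - p := by
      rw [measure_compl hAm (measure_ne_top μ A), measure_univ,
        ENNReal.toReal_sub_of_le prob_le_one ENNReal.one_ne_top]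
      simp [hp]
    have hsplit : ∫ x, |g x ^ 2 - c| ∂μ
        = (∫ x in A, |g x ^ 2 - c| ∂μ) + ∫ x in Aᶜ, |g x ^ 2 - c| ∂μ :=
      (integral_add_compl hAm habsint).symm
    have hA1 : ∫ x in A, |g x ^ 2 - c| ∂μ = p * |c| := by
      rw [setIntegral_congr_fun hAm (g := fun _ => |c|) (fun x hx => by
        have hx0 : g x = 0 := hx
        simp [hx0])]
      rw [setIntegral_const]
      simp [hp, smul_eq_mul, Measure.real]
    have hAc0 : ∫ x in A, g x ^ 2 ∂μ = 0 := by
      rw [setIntegral_congr_fun hAm (g := fun _ => (0:ℝ)) (fun x hx => by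
        simp [show g x = 0 from hx])]
      simp
    have hGsplit : ∫ x in Aᶜ, g x ^ 2 ∂μ = ∫ x, g x ^ 2 ∂μ := by
      have h := integral_add_compl hAm hGint
      linarith
    have hA2 : ∫ x, g x ^ 2 ∂μ - c * (1 - p) ≤ ∫ x in Aᶜ, |g x ^ 2 - c| ∂μ := by
      have hmono : ∫ x in Aᶜ, (g x ^ 2 - c) ∂μ ≤ ∫ x in Aᶜ, |g x ^ 2 - c| ∂μ :=
        setIntegral_mono_on (hGint.sub (integrable_const c)).integrableOn
          habsint.integrableOn hAm.compl (fun x _ => le_abs_self _)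
      have heq : ∫ x in Aᶜ, (g x ^ 2 - c) ∂μ = ∫ x in Aᶜ, g x ^ 2 ∂μ - c * (1 - p) := by
        rw [integral_sub hGint.integrableOn (integrable_const c).integrableOn,
          setIntegral_const]
        simp only [smul_eq_mul, Measure.real, hpc]
        ring
      rw [heq, hGsplit] at hmono
      exact hmono
    rcases le_or_gt 0 c with hc | hc
    · rw [hsplit, hA1, abs_of_nonneg hc]; nlinarith
    · rw [hsplit, hA1, abs_of_neg hc]; nlinarith
  -- apply the L¹ WPI to g²
  have hWPIg := hWPI (fun x => g x ^ 2) hGmeas hGint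
  have hosc : essSup (fun x => g x ^ 2) μ - essInf (fun x => g x ^ 2) μ ≤ C ^ 2 := by
    have h1 := aux_essSup_le (μ := μ) (fun x => g x ^ 2) hGb
    have h2 := aux_essInf_nonneg (μ := μ) (fun x => g x ^ 2)
      (Filter.Eventually.of_forall fun x => sq_nonneg _)
    linarith
  -- integrability over the product
  have haegb : ∀ᵐ z ∂(μ ⊗ₘ P), g z.1 ≤ C ∧ g z.2 ≤ C := (hae_fst hgC).and (hae_snd hgC)
  have hDGint : Integrable (fun z => |g z.2 ^ 2 - g z.1 ^ 2|) (μ ⊗ₘ P) := by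
    refine hbint _ (C ^ 2) (((hg.comp measurable_snd).pow_const 2).sub
      ((hg.comp measurable_fst).pow_const 2)).abs ?_
    filter_upwards [haegb] with z hz
    rw [abs_abs]
    have h1 := hg0 z.1; have h2 := hg0 z.2
    rw [abs_le]
    constructor <;> nlinarith [hz.1, hz.2]
  have hDgint : Integrable (fun z => (g z.2 - g z.1) ^ 2) (μ ⊗ₘ P) := by
    refine hbint _ (C ^ 2) (((hg.comp measurable_snd).sub (hg.comp measurable_fst)).pow_const 2) ?_
    filter_upwards [haegb] with z hz
    rw [abs_of_nonneg (sq_nonneg _)]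
    have h1 := hg0 z.1; have h2 := hg0 z.2
    nlinarith [hz.1, hz.2]
  have hSgint : Integrable (fun z => (g z.2 + g z.1) ^ 2) (μ ⊗ₘ P) := by
    refine hbint _ (4 * C ^ 2) (((hg.comp measurable_snd).add (hg.comp measurable_fst)).pow_const 2) ?_
    filter_upwards [haegb] with z hz
    rw [abs_of_nonneg (sq_nonneg _)]
    have h1 := hg0 z.1; have h2 := hg0 z.2
    nlinarith [hz.1, hz.2]
  have hG2int : Integrable (fun z => (g z.2) ^ 2) (μ ⊗ₘ P) := by
    refine hbint _ (C ^ 2) ((hg.comp measurable_snd).pow_const 2) ?_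
    filter_upwards [haegb] with z hz
    rw [abs_of_nonneg (sq_nonneg _)]
    nlinarith [hg0 z.2, hz.2]
  have hG1int : Integrable (fun z => (g z.1) ^ 2) (μ ⊗ₘ P) := by
    refine hbint _ (C ^ 2) ((hg.comp measurable_fst).pow_const 2) ?_
    filter_upwards [haegb] with z hz
    rw [abs_of_nonneg (sq_nonneg _)]
    nlinarith [hg0 z.1, hz.1]
  have hE1conv : ∫ x, ∫ y, |g y ^ 2 - g x ^ 2| ∂(P x) ∂μ
      = ∫ z, |g z.2 ^ 2 - g z.1 ^ 2| ∂(μ ⊗ₘ P) :=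
    (Measure.integral_compProd hDGint).symm
  -- pointwise Young's inequality
  have hpt : ∀ z : E × E, a * |g z.2 ^ 2 - g z.1 ^ 2|
      ≤ a ^ 2 / (2 * θ) * (g z.2 - g z.1) ^ 2 + θ / 2 * (g z.2 + g z.1) ^ 2 := by
    intro z
    rw [aux_abs_sq_sub _ _ (hg0 z.2) (hg0 z.1), ← mul_assoc]
    calc a * |g z.2 - g z.1| * (g z.2 + g z.1)
        ≤ (a * |g z.2 - g z.1|) ^ 2 / (4 * (θ / 2)) + (θ / 2) * (g z.2 + g z.1) ^ 2 :=
          aux_young (θ / 2) _ _ (by positivity)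
      _ = a ^ 2 / (2 * θ) * (g z.2 - g z.1) ^ 2 + θ / 2 * (g z.2 + g z.1) ^ 2 := by
          rw [mul_pow, sq_abs]
          field_simp
          ring
  have hintLHS : Integrable (fun z => a * |g z.2 ^ 2 - g z.1 ^ 2|) (μ ⊗ₘ P) :=
    hDGint.const_mul a
  have hintRHS : Integrable (fun z => a ^ 2 / (2 * θ) * (g z.2 - g z.1) ^ 2
      + θ / 2 * (g z.2 + g z.1) ^ 2) (μ ⊗ₘ P) :=
    (hDgint.const_mul _).add (hSgint.const_mul _)
  have hmono := integral_mono hintLHS hintRHS hpt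
  rw [integral_add (hDgint.const_mul _) (hSgint.const_mul _), integral_const_mul,
    integral_const_mul, integral_const_mul] at hmono
  -- invariance bound for the sum term
  have hsum : ∫ z, (g z.2 + g z.1) ^ 2 ∂(μ ⊗ₘ P) ≤ 4 * ∫ x, g x ^ 2 ∂μ := by
    have hptw : ∀ z : E × E, (g z.2 + g z.1) ^ 2 ≤ 2 * (g z.2) ^ 2 + 2 * (g z.1) ^ 2 :=
      fun z => by nlinarith [sq_nonneg (g z.2 - g z.1)]
    have hint2 : Integrable (fun z : E × E => 2 * g z.2 ^ 2 + 2 * g z.1 ^ 2) (μ ⊗ₘ P) :=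
      (hG2int.const_mul 2).add (hG1int.const_mul 2)
    have h := integral_mono hSgint hint2 hptw
    rw [integral_add (hG2int.const_mul 2) (hG1int.const_mul 2), integral_const_mul,
      integral_const_mul, hint_snd _ hGmeas, hint_fst _ hGmeas] at h
    linarith
  -- final chain
  have hfinal : ∫ x, g x ^ 2 ∂μ
      ≤ a * ((1 / 2) * ∫ z, |g z.2 ^ 2 - g z.1 ^ 2| ∂(μ ⊗ₘ P)) + r' * C ^ 2 := by
    refine hstepB.trans (hWPIg.trans ?_)
    rw [hE1conv]
    have := mul_le_mul_of_nonneg_left hosc hr'.le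
    linarith
  have hhalf := mul_le_mul_of_nonneg_left hsum (by linarith : (0:ℝ) ≤ θ / 2)
  have hD0 : 0 ≤ ∫ z, |g z.2 ^ 2 - g z.1 ^ 2| ∂(μ ⊗ₘ P) :=
    integral_nonneg fun z => abs_nonneg _
  have hθ' : θ ≠ 0 := ne_of_gt hθ
  have e1 : a ^ 2 / (2 * θ) = 2 * (a ^ 2 / (4 * θ)) := by field_simp; ring
  rw [e1] at hmono
  linarith [hmono, hfinal, hhalf]

/-- an `L¹`-weak Poincaré inequality with function `α₁` implies an
`L²`-weak Poincaré inequality with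
`α(r) = inf_{θ ∈ (0,1)} α₁((1-θ)r)² / (2θ(1-θ)) ≤ 2 α₁(r/2)²`. -/
theorem L1_WPI_implies_L2_WPI
    {E : Type*} [MeasurableSpace E] (μ : Measure E) [IsProbabilityMeasure μ]
    (P : Kernel E E) [IsMarkovKernel P]
    (hinv : ∀ B : Set E, MeasurableSet B → ∫⁻ x, P x B ∂μ = μ B)
    (α₁ : ℝ → ℝ) (hα₁pos : ∀ r ∈ Set.Ioo (0 : ℝ) (1 / 2), 0 < α₁ r)
    (hα₁ : Antitone α₁)
    (hL1WPI : ∀ r ∈ Set.Ioo (0 : ℝ) (1 / 2), ∀ f : E → ℝ, Measurable f →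
      Integrable f μ →
      (⨅ c : ℝ, ∫ x, |f x - c| ∂μ)
        ≤ α₁ r * ((1 / 2) * ∫ x, ∫ y, |f y - f x| ∂(P x) ∂μ)
          + r * (essSup f μ - essInf f μ)) :
    (∀ r > (0 : ℝ), ∀ f : E → ℝ, Measurable f → MemLp f 2 μ →
      (∫ x, f x ∂μ) = 0 →
      ∫ x, (f x) ^ 2 ∂μ
        ≤ (⨅ θ : Set.Ioo (0 : ℝ) 1,
              α₁ ((1 - (θ : ℝ)) * r) ^ 2 / (2 * (θ : ℝ) * (1 - (θ : ℝ))))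
            * ((1 / 2) * ∫ x, ∫ y, (f y - f x) ^ 2 ∂(P x) ∂μ)
          + r * (essSup f μ - essInf f μ) ^ 2) ∧
    ∀ r > (0 : ℝ),
      (⨅ θ : Set.Ioo (0 : ℝ) 1,
          α₁ ((1 - (θ : ℝ)) * r) ^ 2 / (2 * (θ : ℝ) * (1 - (θ : ℝ))))
        ≤ 2 * α₁ (r / 2) ^ 2 := by
  constructor
  · -- Part 1
    intro r hr f hfmeas hfmem hfmean
    have hfint : Integrable f μ := hfmem.integrable one_le_two
    have hf2int : Integrable (fun x => f x ^ 2) μ := hfmem.integrable_sq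
    have hquarter : (1/4 : ℝ) ∈ Set.Ioo (0:ℝ) (1/2) := by norm_num
    have hL1' : ∀ g : E → ℝ, Measurable g → Integrable g μ →
        (⨅ c : ℝ, ∫ x, |g x - c| ∂μ)
          ≤ α₁ (1/4) * ((1 / 2) * ∫ x, ∫ y, |g y - g x| ∂(P x) ∂μ)
            + (1/4) * (essSup g μ - essInf g μ) :=
      fun g hg hgi => hL1WPI (1/4) hquarter g hg hgi
    by_cases hbdd_up : ∃ B : ℝ, ∀ᵐ x ∂μ, f x ≤ B
    swap
    · refine (aux_unbounded_false μ P (α₁ (1/4)) (hα₁pos _ hquarter) hL1'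
          (fun x => -(max (f x) 0)) ((hfmeas.max measurable_const).neg)
          hfint.pos_part.neg (fun x => by simp [le_max_right]) ?_).elim
      intro a ha
      refine hbdd_up ⟨-a, ha.mono fun x hx => ?_⟩
      have hx' : a ≤ -(max (f x) 0) := hx
      have h2 := le_max_left (f x) 0
      linarith
    by_cases hbdd_lo : ∃ B : ℝ, ∀ᵐ x ∂μ, B ≤ f x
    swap
    · refine (aux_unbounded_false μ P (α₁ (1/4)) (hα₁pos _ hquarter) hL1'
          (fun x => -(max (-f x) 0)) ((hfmeas.neg.max measurable_const).neg)
          hfint.neg.pos_part.neg (fun x => by simp [le_max_right]) ?_).elim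
      intro a ha
      refine hbdd_lo ⟨a, ha.mono fun x hx => ?_⟩
      have hx' : a ≤ -(max (-f x) 0) := hx
      have h2 := le_max_left (-f x) 0
      linarith
    -- f is essentially bounded
    set S := essSup f μ with hSdef
    set I := essInf f μ with hIdef
    have haeS : ∀ᵐ x ∂μ, f x ≤ S := aux_ae_le_essSup f hbdd_up
    have haeI : ∀ᵐ x ∂μ, I ≤ f x := aux_ae_essInf_le f hbdd_lo
    have hIS : I ≤ S := by
      obtain ⟨x, h1, h2⟩ := (haeS.and haeI).exists
      linarith
    obtain ⟨m, hIm, hmS, hhalf_le, hhalf_ge⟩ := aux_median f hfmeas haeS haeI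
    -- marginals of the product measure
    have hsnd : (μ ⊗ₘ P).map Prod.snd = μ := by
      ext B hB
      rw [Measure.map_apply measurable_snd hB, Measure.compProd_apply (measurable_snd hB)]
      have hpre : ∀ a : E, (Prod.mk a ⁻¹' (Prod.snd ⁻¹' B)) = B := fun a => rfl
      simp_rw [hpre]
      exact hinv B hB
    have hfst : (μ ⊗ₘ P).map Prod.fst = μ := by
      rw [show (μ ⊗ₘ P).map Prod.fst = (μ ⊗ₘ P).fst from rfl, Measure.fst_compProd]
    have hae_snd : ∀ {p : E → Prop}, (∀ᵐ x ∂μ, p x) → ∀ᵐ z ∂(μ ⊗ₘ P), p z.2 := by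
      intro p hp; rw [← hsnd] at hp; exact ae_of_ae_map measurable_snd.aemeasurable hp
    have hae_fst : ∀ {p : E → Prop}, (∀ᵐ x ∂μ, p x) → ∀ᵐ z ∂(μ ⊗ₘ P), p z.1 := by
      intro p hp; rw [← hfst] at hp; exact ae_of_ae_map measurable_fst.aemeasurable hp
    have haefb : ∀ᵐ z ∂(μ ⊗ₘ P), (I ≤ f z.1 ∧ f z.1 ≤ S) ∧ (I ≤ f z.2 ∧ f z.2 ≤ S) :=
      (hae_fst (haeI.and haeS)).and (hae_snd (haeI.and haeS))
    -- the Dirichlet form, in product form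
    have hEfint : Integrable (fun z => (f z.2 - f z.1) ^ 2) (μ ⊗ₘ P) := by
      refine Integrable.mono' (integrable_const ((S - I) ^ 2))
        (((hfmeas.comp measurable_snd).sub
          (hfmeas.comp measurable_fst)).pow_const 2).aestronglyMeasurable ?_
      filter_upwards [haefb] with z hz
      rcases hz with ⟨⟨h1, h2⟩, ⟨h3, h4⟩⟩
      rw [Real.norm_eq_abs, abs_of_nonneg (sq_nonneg _)]
      nlinarith
    set Ef : ℝ := ∫ z, (f z.2 - f z.1) ^ 2 ∂(μ ⊗ₘ P) with hEfdef
    have hEfnn : 0 ≤ Ef := integral_nonneg fun z => sq_nonneg _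
    have hEfconv : ∫ x, ∫ y, (f y - f x) ^ 2 ∂(P x) ∂μ = Ef :=
      (Measure.integral_compProd hEfint).symm
    -- positive and negative parts around a median
    set gp : E → ℝ := fun x => max (f x - m) 0 with hgp
    set gm : E → ℝ := fun x => max (m - f x) 0 with hgm
    have hgpmeas : Measurable gp := (hfmeas.sub measurable_const).max measurable_const
    have hgmmeas : Measurable gm := (measurable_const.sub hfmeas).max measurable_const
    have hgp0 : ∀ x, 0 ≤ gp x := fun x => le_max_right _ _
    have hgm0 : ∀ x, 0 ≤ gm x := fun x => le_max_right _ _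
    have hgpC : ∀ᵐ x ∂μ, gp x ≤ S - m :=
      haeS.mono fun x hx => max_le (by linarith) (by linarith)
    have hgmC : ∀ᵐ x ∂μ, gm x ≤ m - I :=
      haeI.mono fun x hx => max_le (by linarith) (by linarith)
    have hgphalf : (1/2 : ℝ≥0∞) ≤ μ {x | gp x = 0} :=
      hhalf_le.trans (measure_mono fun x hx => by
        have hx' : f x ≤ m := hx
        show gp x = 0
        simp only [hgp]
        exact max_eq_right (by linarith))
    have hgmhalf : (1/2 : ℝ≥0∞) ≤ μ {x | gm x = 0} :=
      hhalf_ge.trans (measure_mono fun x hx => by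
        have hx' : m ≤ f x := hx
        show gm x = 0
        simp only [hgm]
        exact max_eq_right (by linarith))
    -- pointwise decomposition
    have hdecomp : ∀ x, (f x - m) ^ 2 = gp x ^ 2 + gm x ^ 2 := by
      intro x
      simp only [hgp, hgm]
      rcases le_total (f x) m with h | h
      · rw [max_eq_right (by linarith : f x - m ≤ 0), max_eq_left (by linarith : (0:ℝ) ≤ m - f x)]
        ring
      · rw [max_eq_left (by linarith : (0:ℝ) ≤ f x - m), max_eq_right (by linarith : m - f x ≤ 0)]
        ring
    have hgp2int : Integrable (fun x => gp x ^ 2) μ :=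
      (integrable_const ((S - m) ^ 2)).mono' (hgpmeas.pow_const 2).aestronglyMeasurable
        (hgpC.mono fun x hx => by
          rw [Real.norm_eq_abs, abs_of_nonneg (sq_nonneg _)]
          nlinarith [hgp0 x])
    have hgm2int : Integrable (fun x => gm x ^ 2) μ :=
      (integrable_const ((m - I) ^ 2)).mono' (hgmmeas.pow_const 2).aestronglyMeasurable
        (hgmC.mono fun x hx => by
          rw [Real.norm_eq_abs, abs_of_nonneg (sq_nonneg _)]
          nlinarith [hgm0 x])
    have hsum2 : ∫ x, (f x - m) ^ 2 ∂μ = (∫ x, gp x ^ 2 ∂μ) + ∫ x, gm x ^ 2 ∂μ := by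
      rw [← integral_add hgp2int hgm2int]
      exact integral_congr_ae (Filter.Eventually.of_forall fun x => hdecomp x)
    -- the variance bound : ∫ f² ≤ ∫ (f - c)² for any c, using mean zero
    have hvar : ∀ c : ℝ, ∫ x, f x ^ 2 ∂μ ≤ ∫ x, (f x - c) ^ 2 ∂μ := by
      intro c
      have hcm : Integrable (fun x => 2 * c * f x) μ := hfint.const_mul (2 * c)
      have hsubint : Integrable (fun x => f x ^ 2 - 2 * c * f x) μ := hf2int.sub hcm
      have h1 : (fun x => (f x - c) ^ 2) =ᵐ[μ] fun x => f x ^ 2 - 2 * c * f x + c ^ 2 :=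
        Filter.Eventually.of_forall fun x => by ring
      rw [integral_congr_ae h1, integral_add hsubint (integrable_const _),
        integral_sub hf2int hcm, integral_const_mul, hfmean, integral_const]
      simp [measure_univ]
      nlinarith [sq_nonneg c]
    -- per-θ estimate
    have hper : ∀ θ : ℝ, 0 < θ → θ < 1 →
        ∫ x, f x ^ 2 ∂μ ≤ α₁ ((1 - θ) * r) ^ 2 / (2 * θ * (1 - θ)) * ((1/2) * Ef)
          + r * (S - I) ^ 2 := by
      intro θ hθ0 hθ1
      have hθ1' : 0 < 1 - θ := by linarith
      have htermnn : 0 ≤ α₁ ((1 - θ) * r) ^ 2 / (2 * θ * (1 - θ)) :=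
        div_nonneg (sq_nonneg _) (by nlinarith)
      by_cases hcase : (1 - θ) * r < 1/2
      · -- main case : apply the key lemma to both parts
        have hr'mem : (1 - θ) * r ∈ Set.Ioo (0:ℝ) (1/2) := ⟨by positivity, hcase⟩
        have ha : 0 < α₁ ((1 - θ) * r) := hα₁pos _ hr'mem
        have hkeyp := aux_key μ P hsnd hfst ((1 - θ) * r) θ (α₁ ((1 - θ) * r)) hr'mem.1
          hθ0 hθ1 ha (fun g hg hgi => hL1WPI _ hr'mem g hg hgi)
          gp hgpmeas hgp0 (S - m) (by linarith) hgpC hgphalf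
        have hkeym := aux_key μ P hsnd hfst ((1 - θ) * r) θ (α₁ ((1 - θ) * r)) hr'mem.1
          hθ0 hθ1 ha (fun g hg hgi => hL1WPI _ hr'mem g hg hgi)
          gm hgmmeas hgm0 (m - I) (by linarith) hgmC hgmhalf
        -- the two energies add up to at most the energy of f
        have haegpb : ∀ᵐ z ∂(μ ⊗ₘ P), gp z.1 ≤ S - m ∧ gp z.2 ≤ S - m :=
          (hae_fst hgpC).and (hae_snd hgpC)
        have haegmb : ∀ᵐ z ∂(μ ⊗ₘ P), gm z.1 ≤ m - I ∧ gm z.2 ≤ m - I :=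
          (hae_fst hgmC).and (hae_snd hgmC)
        have hEpint : Integrable (fun z => (gp z.2 - gp z.1) ^ 2) (μ ⊗ₘ P) := by
          refine Integrable.mono' (integrable_const ((S - m) ^ 2))
            (((hgpmeas.comp measurable_snd).sub
              (hgpmeas.comp measurable_fst)).pow_const 2).aestronglyMeasurable ?_
          filter_upwards [haegpb] with z hz
          rw [Real.norm_eq_abs, abs_of_nonneg (sq_nonneg _)]
          nlinarith [hgp0 z.1, hgp0 z.2, hz.1, hz.2]
        have hEmint : Integrable (fun z => (gm z.2 - gm z.1) ^ 2) (μ ⊗ₘ P) := by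
          refine Integrable.mono' (integrable_const ((m - I) ^ 2))
            (((hgmmeas.comp measurable_snd).sub
              (hgmmeas.comp measurable_fst)).pow_const 2).aestronglyMeasurable ?_
          filter_upwards [haegmb] with z hz
          rw [Real.norm_eq_abs, abs_of_nonneg (sq_nonneg _)]
          nlinarith [hgm0 z.1, hgm0 z.2, hz.1, hz.2]
        have hsum3 : Integrable (fun z => (gp z.2 - gp z.1) ^ 2 + (gm z.2 - gm z.1) ^ 2)
            (μ ⊗ₘ P) := hEpint.add hEmint
        have hEsum : (∫ z, (gp z.2 - gp z.1) ^ 2 ∂(μ ⊗ₘ P))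
            + (∫ z, (gm z.2 - gm z.1) ^ 2 ∂(μ ⊗ₘ P)) ≤ Ef := by
          rw [← integral_add hEpint hEmint]
          refine integral_mono hsum3 hEfint fun z => ?_
          have h := aux_sq_split (f z.2 - m) (f z.1 - m)
          simp only [neg_sub] at h
          have harg : f z.2 - m - (f z.1 - m) = f z.2 - f z.1 := by ring
          rw [harg] at h
          simpa [hgp, hgm] using h
        have hC2 : (S - m) ^ 2 + (m - I) ^ 2 ≤ (S - I) ^ 2 := by
          nlinarith [mul_nonneg (sub_nonneg.2 hmS) (sub_nonneg.2 hIm)]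
        have hann : (0:ℝ) ≤ α₁ ((1 - θ) * r) ^ 2 / (4 * θ) :=
          div_nonneg (sq_nonneg _) (by linarith)
        have hmul := mul_le_mul_of_nonneg_left hEsum hann
        have h1 : ∫ x, f x ^ 2 ∂μ ≤ (∫ x, gp x ^ 2 ∂μ) + ∫ x, gm x ^ 2 ∂μ :=
          (hvar m).trans_eq hsum2
        have h2 : (1 - θ) * ∫ x, f x ^ 2 ∂μ
            ≤ α₁ ((1 - θ) * r) ^ 2 / (4 * θ) * Ef + (1 - θ) * r * (S - I) ^ 2 := by
          have h3 := mul_le_mul_of_nonneg_left h1 hθ1'.le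
          have h4 : (0:ℝ) < (1 - θ) * r := by positivity
          nlinarith [hkeyp, hkeym, hmul]
        have hθ0' : θ ≠ 0 := ne_of_gt hθ0
        have h1θ' : (1:ℝ) - θ ≠ 0 := ne_of_gt hθ1'
        have heq : α₁ ((1 - θ) * r) ^ 2 / (2 * θ * (1 - θ)) * ((1/2) * Ef)
            = (α₁ ((1 - θ) * r) ^ 2 / (4 * θ) * Ef) / (1 - θ) := by
          rw [eq_div_iff h1θ']
          field_simp
          ring
        rw [heq, ← sub_le_iff_le_add, le_div_iff₀ hθ1']
        nlinarith [h2]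
      · -- trivial case : r is large
        push_neg at hcase
        have hrbig : 1/4 ≤ r := by nlinarith
        have hintc : Integrable (fun x => (f x - (S + I)/2) ^ 2) μ := by
          have hcm : Integrable (fun x => (S + I) * f x) μ := hfint.const_mul (S + I)
          have hsubint : Integrable (fun x => f x ^ 2 - (S + I) * f x) μ := hf2int.sub hcm
          have h1 : (fun x => (f x - (S + I)/2) ^ 2)
              =ᵐ[μ] fun x => f x ^ 2 - (S + I) * f x + ((S + I)/2) ^ 2 :=
            Filter.Eventually.of_forall fun x => by ring
          rw [integrable_congr h1]
          exact hsubint.add (integrable_const _)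
        have hfc : ∫ x, f x ^ 2 ∂μ ≤ r * (S - I) ^ 2 := by
          have h1 := hvar ((S + I)/2)
          have h2 : ∫ x, (f x - (S + I)/2) ^ 2 ∂μ ≤ ((S - I)/2) ^ 2 := by
            refine le_trans (integral_mono_ae hintc (integrable_const (((S - I)/2) ^ 2)) ?_) ?_
            · filter_upwards [haeS, haeI] with x hx1 hx2
              nlinarith
            · rw [integral_const]
              simp [measure_univ]
          nlinarith [sq_nonneg (S - I)]
        have hnn : 0 ≤ α₁ ((1 - θ) * r) ^ 2 / (2 * θ * (1 - θ)) * ((1/2) * Ef) :=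
          mul_nonneg htermnn (by linarith)
        linarith
    -- put things together via the infimum
    rw [hEfconv]
    by_cases hEf0 : Ef = 0
    · have h := hper (1/2) (by norm_num) (by norm_num)
      rw [hEf0] at h ⊢
      simp only [mul_zero, zero_add] at h ⊢
      simpa using h
    · have hEfpos : 0 < Ef := lt_of_le_of_ne hEfnn (Ne.symm hEf0)
      haveI hne : Nonempty (Set.Ioo (0:ℝ) 1) := ⟨⟨1/2, by norm_num⟩⟩
      have hle : ∀ θ : Set.Ioo (0:ℝ) 1,
          (∫ x, f x ^ 2 ∂μ - r * (S - I) ^ 2) / ((1/2) * Ef)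
            ≤ α₁ ((1 - (θ:ℝ)) * r) ^ 2 / (2 * (θ:ℝ) * (1 - (θ:ℝ))) := by
        intro θ
        rw [div_le_iff₀ (by positivity)]
        have h := hper θ θ.2.1 θ.2.2
        linarith
      have hinf := le_ciInf hle
      rw [div_le_iff₀ (by positivity)] at hinf
      linarith
  · -- Part 2
    intro r hr
    have hne : Nonempty (Set.Ioo (0:ℝ) 1) := ⟨⟨1/2, by norm_num⟩⟩
    have hbdd : BddBelow (Set.range fun θ : Set.Ioo (0:ℝ) 1 =>
        α₁ ((1 - (θ : ℝ)) * r) ^ 2 / (2 * (θ : ℝ) * (1 - (θ : ℝ)))) := by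
      refine ⟨0, ?_⟩
      rintro x ⟨θ, rfl⟩
      have h1 : (0:ℝ) < (θ:ℝ) := θ.2.1
      have h2 : (θ:ℝ) < 1 := θ.2.2
      exact div_nonneg (sq_nonneg _) (by nlinarith)
    refine le_trans (ciInf_le hbdd ⟨1/2, by norm_num⟩) ?_
    rw [show (1 - (1/2:ℝ)) * r = r / 2 by ring,
      show (2 * (1/2:ℝ) * (1 - 1/2)) = 1/2 by norm_num]
    have heq : α₁ (r/2) ^ 2 / (1/2 : ℝ) = 2 * α₁ (r/2) ^ 2 := by
      field_simp
    exact heq.le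
end

section
/- Let E = [1,∞), a > 1, b ∈ (0, a−1). Let ν be the probability measure on E with density ν(x) = (a−1)·x^{−a}, w(x) = x^{−b}, and define the Markov kernel P(x,·) = w(x)·ν(·) + (1−w(x))·δ_x(·). Then P is reversible with respect to the probability measure μ with density μ(x) = (a−b−1)·x^{−(a−b)}, and for every f ∈ L²(μ), the Dirichlet form satisfies 𝓔(P, f) = ν(w⁻¹)⁻¹ · var_ν(f), where ν(w⁻¹) = ∫ w(x)⁻¹ ν(dx). -/
open MeasureTheory
open scoped ENNReal

noncomputable def powerLaw (a : ℝ) : Measure ℝ :=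
  (volume.restrict (Set.Ici 1)).withDensity fun x => ENNReal.ofReal ((a - 1) * x ^ (-a))

noncomputable def jumpKernel (a b : ℝ) (x : ℝ) : Measure ℝ :=
  ENNReal.ofReal (x ^ (-b)) • powerLaw a
    + (1 - ENNReal.ofReal (x ^ (-b))) • Measure.dirac x

namespace JKAux

open Set Real

lemma meas_w (b : ℝ) : Measurable fun x : ℝ => ENNReal.ofReal (x ^ (-b)) :=
  ENNReal.measurable_ofReal.comp (measurable_id'.pow_const _)

lemma meas_dens (a : ℝ) : Measurable fun x : ℝ => ENNReal.ofReal ((a - 1) * x ^ (-a)) :=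
  ENNReal.measurable_ofReal.comp ((measurable_id'.pow_const _).const_mul _)

lemma integral_powerLaw (a : ℝ) (ha : 1 ≤ a) (g : ℝ → ℝ) :
    ∫ x, g x ∂(powerLaw a) = ∫ x in Set.Ici 1, (a - 1) * x ^ (-a) * g x := by
  rw [powerLaw]
  have he : (fun x : ℝ => ENNReal.ofReal ((a - 1) * x ^ (-a)))
      = fun x : ℝ => (((a - 1) * x ^ (-a)).toNNReal : ℝ≥0∞) := rfl
  rw [he, integral_withDensity_eq_integral_smul
    (((measurable_id'.pow_const _).const_mul _).real_toNNReal) g]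
  refine setIntegral_congr_fun measurableSet_Ici fun x hx => ?_
  have hx0 : (0:ℝ) < x := lt_of_lt_of_le one_pos hx
  have hnn : 0 ≤ (a - 1) * x ^ (-a) := mul_nonneg (by linarith) (Real.rpow_nonneg hx0.le _)
  rw [NNReal.smul_def, smul_eq_mul, Real.coe_toNNReal _ hnn]

lemma powerLaw_moment (a t : ℝ) (ha : 1 < a) (ht : t < a - 1) :
    ∫ x, x ^ t ∂(powerLaw a) = (a - 1) / (a - 1 - t) := by
  rw [integral_powerLaw a ha.le, MeasureTheory.integral_Ici_eq_integral_Ioi]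
  have h1 : ∀ x ∈ Set.Ioi (1:ℝ), (a - 1) * x ^ (-a) * x ^ t = (a - 1) * x ^ (t - a) := by
    intro x hx
    have hx0 : (0:ℝ) < x := lt_trans one_pos hx
    rw [mul_assoc, ← Real.rpow_add hx0]
    congr 1
    ring
  rw [setIntegral_congr_fun measurableSet_Ioi h1, MeasureTheory.integral_const_mul,
      integral_Ioi_rpow_of_lt (by linarith) one_pos, Real.one_rpow]
  have h2 : t - a + 1 ≠ 0 := by intro h; linarith [h]
  have h3 : a - 1 - t ≠ 0 := by intro h; linarith [h]
  field_simp
  ring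

lemma powerLaw_isProb (a : ℝ) (ha : 1 < a) : IsProbabilityMeasure (powerLaw a) := by
  constructor
  have h := powerLaw_moment a 0 ha (by linarith)
  simp only [Real.rpow_zero] at h
  simp only [sub_zero] at h
  rw [integral_const, smul_eq_mul, mul_one, div_self (by linarith : a - 1 ≠ 0)] at h
  exact (ENNReal.toReal_eq_one_iff _).mp h

lemma withDensity_powerLaw (a b : ℝ) (ha : 1 < a) (hb0 : 0 < b) (hb : b < a - 1) :
    (powerLaw (a - b)).withDensity (fun x => ENNReal.ofReal (x ^ (-b)))
      = ENNReal.ofReal ((a - b - 1) / (a - 1)) • powerLaw a := by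
  rw [powerLaw, powerLaw, ← withDensity_mul _ (meas_dens _) (meas_w b),
      ← withDensity_smul _ (meas_dens a)]
  refine withDensity_congr_ae ?_
  filter_upwards [ae_restrict_mem measurableSet_Ici] with x hx
  have hx0 : (0:ℝ) < x := lt_of_lt_of_le one_pos hx
  simp only [Pi.mul_apply, Pi.smul_apply, smul_eq_mul]
  rw [← ENNReal.ofReal_mul (mul_nonneg (by linarith) (Real.rpow_nonneg hx0.le _)),
      ← ENNReal.ofReal_mul (div_nonneg (by linarith) (by linarith))]
  congr 1
  rw [mul_assoc, ← Real.rpow_add hx0]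
  have he : -(a - b) + -b = -a := by ring
  rw [he]
  have h3 : a - 1 ≠ 0 := by intro h; linarith [h]
  field_simp

lemma powerLaw_le (a b : ℝ) (ha : 1 < a) (hb0 : 0 < b) (hb : b < a - 1) :
    powerLaw a ≤ ENNReal.ofReal ((a - 1) / (a - b - 1)) • powerLaw (a - b) := by
  simp only [powerLaw]
  rw [← withDensity_smul _ (meas_dens (a - b))]
  refine withDensity_mono ?_
  filter_upwards [ae_restrict_mem measurableSet_Ici] with x hx
  have hx0 : (0:ℝ) < x := lt_of_lt_of_le one_pos hx
  simp only [Pi.smul_apply, smul_eq_mul]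
  rw [← ENNReal.ofReal_mul (div_nonneg (by linarith) (by linarith))]
  apply ENNReal.ofReal_le_ofReal
  have h2 : x ^ (-a) ≤ x ^ (-(a - b)) :=
    Real.rpow_le_rpow_of_exponent_le hx (by linarith)
  have h3 : (a - 1) / (a - b - 1) * ((a - b - 1) * x ^ (-(a - b))) = (a - 1) * x ^ (-(a - b)) := by
    have : a - b - 1 ≠ 0 := by intro h; linarith [h]
    field_simp
  rw [h3]
  exact mul_le_mul_of_nonneg_left h2 (by linarith)

lemma integrable_dirac' {g : ℝ → ℝ} (hg : Measurable g) (x : ℝ) :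
    Integrable g (Measure.dirac x) := by
  refine ⟨hg.aestronglyMeasurable, ?_⟩
  rw [hasFiniteIntegral_def, lintegral_dirac]
  exact ENNReal.coe_lt_top

end JKAux

/-- for `a > 1`, `0 < b < a - 1`, the kernel
`P(x,·) = x^{-b} ν + (1 - x^{-b}) δ_x` with `ν` the `(a-1)x^{-a}` law on `[1,∞)` is
reversible with respect to `μ = powerLaw (a - b)` (density `(a-b-1)x^{-(a-b)}`), and
its Dirichlet form satisfies `𝓔(P, f) = ν(w⁻¹)⁻¹ · var_ν(f)` for all `f ∈ L²(μ)`. -/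
theorem jumpKernel_reversible_and_dirichlet
    (a b : ℝ) (ha : 1 < a) (hb0 : 0 < b) (hb : b < a - 1) :
    (∀ A B : Set ℝ, MeasurableSet A → MeasurableSet B →
      ∫⁻ x in A, jumpKernel a b x B ∂(powerLaw (a - b))
        = ∫⁻ x in B, jumpKernel a b x A ∂(powerLaw (a - b))) ∧
    ∀ f : ℝ → ℝ, Measurable f → MemLp f 2 (powerLaw (a - b)) →
      (1 / 2) * ∫ x, (∫ y, (f y - f x) ^ 2 ∂(jumpKernel a b x)) ∂(powerLaw (a - b))
        = (∫ x, x ^ b ∂(powerLaw a))⁻¹ *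
            ((∫ x, (f x) ^ 2 ∂(powerLaw a)) - (∫ x, f x ∂(powerLaw a)) ^ 2) := by
  have ha1 : (0:ℝ) < a - 1 := by linarith
  have hab1 : (0:ℝ) < a - b - 1 := by linarith
  set ν : Measure ℝ := powerLaw a with hνdef
  set μ : Measure ℝ := powerLaw (a - b) with hμdef
  haveI hprob : IsProbabilityMeasure ν := JKAux.powerLaw_isProb a ha
  set c : ℝ := (a - b - 1) / (a - 1) with hcdef
  have hc0 : 0 < c := div_pos hab1 ha1
  have hWD : μ.withDensity (fun x => ENNReal.ofReal (x ^ (-b))) = ENNReal.ofReal c • ν :=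
    JKAux.withDensity_powerLaw a b ha hb0 hb
  have hw : Measurable fun x : ℝ => ENNReal.ofReal (x ^ (-b)) := JKAux.meas_w b
  have haeμ : ∀ᵐ x ∂μ, x ∈ Set.Ici (1:ℝ) := by
    refine (withDensity_absolutelyContinuous _ _).ae_le ?_
    exact ae_restrict_mem measurableSet_Ici
  constructor
  · have key : ∀ A B : Set ℝ, MeasurableSet A → MeasurableSet B →
        ∫⁻ x in A, jumpKernel a b x B ∂μ
          = ENNReal.ofReal c * (ν A * ν B)
            + ∫⁻ x in B ∩ A, (1 - ENNReal.ofReal (x ^ (-b))) ∂μ := by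
      intro A B hA hB
      have hker : ∀ x : ℝ, jumpKernel a b x B
          = ENNReal.ofReal (x ^ (-b)) * ν B
            + (1 - ENNReal.ofReal (x ^ (-b))) * B.indicator 1 x := by
        intro x
        rw [jumpKernel, Measure.add_apply, Measure.smul_apply, Measure.smul_apply,
            smul_eq_mul, smul_eq_mul, Measure.dirac_apply' _ hB]
      simp_rw [hker]
      rw [lintegral_add_left (hw.mul_const _)]
      congr 1
      · rw [lintegral_mul_const _ hw, ← withDensity_apply _ hA, hWD,
            Measure.smul_apply, smul_eq_mul, mul_assoc]
      · have hind : ∀ x : ℝ, (1 - ENNReal.ofReal (x ^ (-b))) * B.indicator 1 x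
            = B.indicator (fun y => 1 - ENNReal.ofReal (y ^ (-b))) x := by
          intro x
          by_cases hx : x ∈ B <;> simp [hx]
        simp_rw [hind]
        rw [lintegral_indicator hB, Measure.restrict_restrict hB]
    intro A B hA hB
    rw [key A B hA hB, key B A hB hA, Set.inter_comm, mul_comm (ν A)]
  · intro f hfm hf2
    have hf2ν : MemLp f 2 ν :=
      hf2.of_measure_le_smul ENNReal.ofReal_ne_top (JKAux.powerLaw_le a b ha hb0 hb)
    have hint2 : Integrable (fun y => f y ^ 2) ν := hf2ν.integrable_sq
    have hint1 : Integrable f ν := hf2ν.integrable one_le_two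
    set I1 : ℝ := ∫ y, f y ∂ν with hI1
    set I2 : ℝ := ∫ y, f y ^ 2 ∂ν with hI2
    have hG : ∀ t : ℝ, ∫ y, (f y - t) ^ 2 ∂ν = I2 - 2 * I1 * t + t ^ 2 := by
      intro t
      have e : ∀ y : ℝ, (f y - t) ^ 2 = (f y ^ 2 - (2 * t) * f y) + t ^ 2 := fun y => by ring
      simp only [e]
      have hA : Integrable (fun y => f y ^ 2 - 2 * t * f y) ν := hint2.sub (hint1.const_mul _)
      rw [integral_add hA (integrable_const _),
          integral_sub hint2 (hint1.const_mul _), MeasureTheory.integral_const_mul, integral_const]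
      simp [measure_univ]
      ring
    have hInner : ∀ᵐ x ∂μ, (∫ y, (f y - f x) ^ 2 ∂(jumpKernel a b x))
        = x ^ (-b) * (I2 - 2 * I1 * f x + f x ^ 2) := by
      filter_upwards [haeμ] with x hx
      have hx0 : (0:ℝ) < x := lt_of_lt_of_le one_pos hx
      have hg : Integrable (fun y => (f y - f x) ^ 2) ν :=
        (hf2ν.sub (memLp_const _)).integrable_sq
      have htop : (1 - ENNReal.ofReal (x ^ (-b))) ≠ ∞ :=
        ne_top_of_le_ne_top ENNReal.one_ne_top tsub_le_self
      rw [jumpKernel, integral_add_measure (hg.smul_measure ENNReal.ofReal_ne_top)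
            ((JKAux.integrable_dirac' ((hfm.sub measurable_const).pow_const 2) x).smul_measure htop),
          integral_smul_measure, integral_smul_measure, integral_dirac,
          hG (f x), ENNReal.toReal_ofReal (Real.rpow_nonneg hx0.le _)]
      simp [smul_eq_mul]
    rw [integral_congr_ae hInner]
    have hstep : ∫ x, x ^ (-b) * (I2 - 2 * I1 * f x + f x ^ 2) ∂μ
        = c * ∫ x, (I2 - 2 * I1 * f x + f x ^ 2) ∂ν := by
      have h1 : ∫ x, (I2 - 2 * I1 * f x + f x ^ 2)
            ∂(μ.withDensity fun x => ENNReal.ofReal (x ^ (-b)))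
          = ∫ x, x ^ (-b) * (I2 - 2 * I1 * f x + f x ^ 2) ∂μ := by
        have he : (fun x : ℝ => ENNReal.ofReal (x ^ (-b)))
            = fun x : ℝ => (((x : ℝ) ^ (-b)).toNNReal : ℝ≥0∞) := rfl
        rw [he, integral_withDensity_eq_integral_smul
          ((measurable_id'.pow_const _).real_toNNReal) _]
        refine integral_congr_ae ?_
        filter_upwards [haeμ] with x hx
        have hx0 : (0:ℝ) < x := lt_of_lt_of_le one_pos hx
        rw [NNReal.smul_def, smul_eq_mul, Real.coe_toNNReal _ (Real.rpow_nonneg hx0.le _)]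
      rw [← h1, hWD, integral_smul_measure, ENNReal.toReal_ofReal hc0.le, smul_eq_mul]
    rw [hstep]
    have hsum : ∫ x, (I2 - 2 * I1 * f x + f x ^ 2) ∂ν = (I2 - 2 * I1 * I1) + I2 := by
      have hA : Integrable (fun x => I2 - 2 * I1 * f x) ν := (integrable_const _).sub (hint1.const_mul _)
      rw [integral_add hA hint2,
          integral_sub (integrable_const _) (hint1.const_mul _), MeasureTheory.integral_const_mul,
          integral_const]
      simp [measure_univ]
      rfl
    rw [hsum]
    have hmom : ∫ x, x ^ b ∂ν = (a - 1) / (a - 1 - b) :=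
      JKAux.powerLaw_moment a b ha hb
    rw [hmom]
    have h3 : a - 1 - b ≠ 0 := by intro h; linarith [h]
    have h4 : a - 1 ≠ 0 := ne_of_gt ha1
    rw [hcdef]
    field_simp
    ring
end
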